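/- arXiv:2204.02879 — 6 statements merged into one kernel-verified Lean document; each statement's English description precedes it below -/
import Mathlib

section
/- For any positive integer n, the number of partitions with perimeter n all of whose parts are odd equals the number of partitions with perimeter n all of whose parts are distinct. -/
/-- A partition: a nonempty weakly decreasing list of positive integers. -/
def IsPartition (l : List ℕ) : Prop :=
  l ≠ [] ∧ l.Pairwise (· ≥ ·) ∧ ∀ x ∈ l, 0 < x

/-- The perimeter of a partition: largest part plus number of parts minus 1. -/
def perim (l : List ℕ) : ℕ := l.headI + l.length - 1

/-- Number of repeated parts: indices i with λ_i = λ_{i+1}. -/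
def repStat (l : List ℕ) : ℕ :=
  ((List.range (l.length - 1)).filter fun i => l.getD i 0 = l.getD (i + 1) 0).length

/-- Number of even parts. -/
def evenStat (l : List ℕ) : ℕ := l.countP fun x => x % 2 = 0

def Oset (n : ℕ) : Set (List ℕ) := {l | IsPartition l ∧ perim l = n ∧ ∀ x ∈ l, Odd x}

def Dset (n : ℕ) : Set (List ℕ) := {l | IsPartition l ∧ perim l = n ∧ l.Nodup}

lemma le_headI {l : List ℕ} (hs : l.Pairwise (· ≥ ·)) {x : ℕ} (hx : x ∈ l) : x ≤ l.headI := by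
  cases l with
  | nil => simp at hx
  | cons h t =>
    rw [List.pairwise_cons] at hs
    rcases List.mem_cons.mp hx with rfl | hx
    · simp
    · exact hs.1 x hx

lemma headI_mem {l : List ℕ} (h : l ≠ []) : l.headI ∈ l := by
  cases l with
  | nil => simp at h
  | cons a t => simp

lemma eq_cons {l : List ℕ} (h : l ≠ []) : l = l.headI :: l.tail := by
  cases l with
  | nil => simp at h
  | cons a t => rfl

lemma part_cons {h : ℕ} {t : List ℕ} : IsPartition (h::t) ↔
    (∀ x ∈ t, x ≤ h) ∧ t.Pairwise (· ≥ ·) ∧ 0 < h ∧ ∀ x ∈ t, 0 < x := by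
  unfold IsPartition
  simp [List.pairwise_cons]
  tauto

lemma perim_cons (h : ℕ) (t : List ℕ) : perim (h::t) = h + t.length := by
  simp [perim]

lemma O_A (n : ℕ) (hn : 2 ≤ n) :
    {l ∈ Oset n | l.tail ≠ [] ∧ l.headI = l.tail.headI} =
      (fun t => t.headI :: t) '' Oset (n-1) := by
  ext l
  constructor
  · rintro ⟨⟨hp, hper, hodd⟩, htne, hht⟩
    cases l with
    | nil => exact absurd rfl hp.1
    | cons h t =>
      simp only [List.tail_cons, List.headI_cons] at htne hht
      rw [part_cons] at hp
      rw [perim_cons] at hper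
      have hlt : 1 ≤ t.length := List.length_pos_iff.mpr htne
      refine ⟨t, ⟨⟨htne, hp.2.1, fun x hx => hp.2.2.2 x hx⟩, ?_, fun x hx => hodd x (by simp [hx])⟩, ?_⟩
      · unfold perim
        omega
      · simp [← hht]
  · rintro ⟨μ, ⟨⟨hne, hsort, hpos⟩, hper, hodd⟩, rfl⟩
    have hlm : 1 ≤ μ.length := List.length_pos_iff.mpr hne
    have hhm : μ.headI ∈ μ := headI_mem hne
    refine ⟨⟨part_cons.mpr ⟨fun x hx => le_headI hsort hx, hsort, hpos _ hhm, hpos⟩, ?_,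
      fun x hx => by rcases List.mem_cons.mp hx with rfl | hx; exacts [hodd _ hhm, hodd x hx]⟩,
      by simp [hne], by simp⟩
    rw [perim_cons]
    unfold perim at hper
    omega

lemma O_B (n : ℕ) (hn : 2 ≤ n) :
    {l ∈ Oset n | ¬(l.tail ≠ [] ∧ l.headI = l.tail.headI)} =
      (fun μ => (μ.headI + 2) :: μ.tail) '' Oset (n-2) := by
  ext l
  constructor
  · rintro ⟨⟨hp, hper, hodd⟩, hP⟩
    cases l with
    | nil => exact absurd rfl hp.1
    | cons h t =>
      simp only [List.tail_cons, List.headI_cons] at hP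
      rw [part_cons] at hp
      rw [perim_cons] at hper
      obtain ⟨a, ha⟩ := hodd h (by simp)
      -- h ≥ 3
      have hh3 : 3 ≤ h := by
        by_contra hc
        have h1 : h = 1 := by omega
        rcases List.eq_nil_or_concat t with rfl | _
        · simp at hper; omega
        · have htne : t ≠ [] := by rintro rfl; simp_all
          have : t.headI ∈ t := headI_mem htne
          have h1' : t.headI ≤ h := hp.1 _ this
          have h2' : 0 < t.headI := hp.2.2.2 _ this
          exact hP ⟨htne, by omega⟩
      have hhd : ∀ x ∈ t, x ≤ h - 2 := by
        intro x hx
        have htne : t ≠ [] := by rintro rfl; simp at hx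
        have hle : x ≤ t.headI := le_headI hp.2.1 hx
        have h1' : t.headI ≤ h := hp.1 _ (headI_mem htne)
        have hne' : t.headI ≠ h := fun he => hP ⟨htne, he.symm⟩
        obtain ⟨b, hb⟩ := hodd t.headI (List.mem_cons.mpr (Or.inr (headI_mem htne)))
        omega
      refine ⟨(h-2)::t, ⟨part_cons.mpr ⟨hhd, hp.2.1, by omega, hp.2.2.2⟩, ?_,
        fun x hx => by
          rcases List.mem_cons.mp hx with rfl | hx
          · exact ⟨a - 1, by omega⟩
          · exact hodd x (by simp [hx])⟩, ?_⟩
      · rw [perim_cons]; omega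
      · simp only [List.headI_cons, List.tail_cons]
        congr 1
        omega
  · rintro ⟨μ, ⟨⟨hne, hsort, hpos⟩, hper, hodd⟩, rfl⟩
    have hlm : 1 ≤ μ.length := List.length_pos_iff.mpr hne
    have hhm : μ.headI ∈ μ := headI_mem hne
    have hh1 : 1 ≤ μ.headI := hpos _ hhm
    have htail : ∀ x ∈ μ.tail, x ∈ μ := fun x hx => List.mem_of_mem_tail hx
    have hsort' : μ.tail.Pairwise (· ≥ ·) := by
      rw [eq_cons hne] at hsort; exact (List.pairwise_cons.mp hsort).2
    have hperm : μ.headI + μ.length - 1 = n - 2 := hper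
    have hn2 : 2 ≤ n := hn
    obtain ⟨a, ha⟩ := hodd _ hhm
    constructor
    · refine ⟨part_cons.mpr ⟨fun x hx => by have := le_headI hsort (htail x hx); omega,
        hsort', by omega, fun x hx => hpos x (htail x hx)⟩, ?_, fun x hx => ?_⟩
      · rw [perim_cons]
        have : μ.tail.length = μ.length - 1 := by rw [eq_cons hne]; simp
        omega
      · rcases List.mem_cons.mp hx with rfl | hx
        · exact ⟨a + 1, by omega⟩
        · exact hodd x (htail x hx)
    · simp only [List.tail_cons, List.headI_cons]
      rintro ⟨htne, habs⟩
      have := le_headI hsort (htail _ (headI_mem htne))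
      omega

lemma D_A (n : ℕ) (hn : 2 ≤ n) :
    {l ∈ Dset n | l.tail ≠ [] ∧ l.headI = l.tail.headI + 1} =
      (fun t => (t.headI + 1) :: t) '' Dset (n-2) := by
  ext l
  constructor
  · rintro ⟨⟨hp, hper, hnd⟩, htne, hht⟩
    cases l with
    | nil => exact absurd rfl hp.1
    | cons h t =>
      simp only [List.tail_cons, List.headI_cons] at htne hht
      rw [part_cons] at hp
      rw [perim_cons] at hper
      have hlt : 1 ≤ t.length := List.length_pos_iff.mpr htne
      refine ⟨t, ⟨⟨htne, hp.2.1, hp.2.2.2⟩, by unfold perim; omega,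
        (List.nodup_cons.mp hnd).2⟩, ?_⟩
      simp only []
      rw [← hht]
  · rintro ⟨μ, ⟨⟨hne, hsort, hpos⟩, hper, hnd⟩, rfl⟩
    have hlm : 1 ≤ μ.length := List.length_pos_iff.mpr hne
    have hperm : μ.headI + μ.length - 1 = n - 2 := hper
    refine ⟨⟨part_cons.mpr ⟨fun x hx => by have := le_headI hsort hx; omega, hsort,
      by omega, hpos⟩, by rw [perim_cons]; omega,
      List.nodup_cons.mpr ⟨fun hmem => by have := le_headI hsort hmem; omega, hnd⟩⟩,
      by simp [hne], by simp⟩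

lemma D_B (n : ℕ) (hn : 2 ≤ n) :
    {l ∈ Dset n | ¬(l.tail ≠ [] ∧ l.headI = l.tail.headI + 1)} =
      (fun μ => (μ.headI + 1) :: μ.tail) '' Dset (n-1) := by
  ext l
  constructor
  · rintro ⟨⟨hp, hper, hnd⟩, hP⟩
    cases l with
    | nil => exact absurd rfl hp.1
    | cons h t =>
      simp only [List.tail_cons, List.headI_cons] at hP
      rw [part_cons] at hp
      rw [perim_cons] at hper
      obtain ⟨hnotmem, hndt⟩ := List.nodup_cons.mp hnd
      -- every element of t is ≤ h - 2
      have hhd : ∀ x ∈ t, x ≤ h - 2 := by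
        intro x hx
        have htne : t ≠ [] := by rintro rfl; simp at hx
        have hle : x ≤ t.headI := le_headI hp.2.1 hx
        have hmem : t.headI ∈ t := headI_mem htne
        have h1' : t.headI ≤ h := hp.1 _ hmem
        have hne' : t.headI ≠ h := fun he => hnotmem (he ▸ hmem)
        have hne2 : h ≠ t.headI + 1 := fun he => hP ⟨htne, he⟩
        omega
      have hh2 : 2 ≤ h := by
        by_contra hc
        have h1 : h = 1 := by
          have := hp.2.2.1; omega
        have ht0 : t = [] := by
          rcases List.eq_nil_or_concat t with rfl | _
          · rfl
          · have htne : t ≠ [] := by rintro rfl; simp_all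
            have hmem := headI_mem htne
            have := hhd _ hmem
            have := hp.2.2.2 _ hmem
            omega
        subst ht0; simp at hper; omega
      refine ⟨(h-1)::t, ⟨part_cons.mpr ⟨fun x hx => by have := hhd x hx; omega, hp.2.1,
        by omega, hp.2.2.2⟩, by rw [perim_cons]; omega,
        List.nodup_cons.mpr ⟨fun hmem => by have := hhd _ hmem; omega, hndt⟩⟩, ?_⟩
      simp only [List.headI_cons, List.tail_cons]
      congr 1
      omega
  · rintro ⟨μ, ⟨⟨hne, hsort, hpos⟩, hper, hnd⟩, rfl⟩
    have hlm : 1 ≤ μ.length := List.length_pos_iff.mpr hne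
    have hhm : μ.headI ∈ μ := headI_mem hne
    have hh1 : 1 ≤ μ.headI := hpos _ hhm
    have htail : ∀ x ∈ μ.tail, x ∈ μ := fun x hx => List.mem_of_mem_tail hx
    have hsort' : μ.tail.Pairwise (· ≥ ·) := by
      rw [eq_cons hne] at hsort; exact (List.pairwise_cons.mp hsort).2
    have hnd' : μ.headI ∉ μ.tail ∧ μ.tail.Nodup := by
      rw [eq_cons hne] at hnd; exact List.nodup_cons.mp hnd
    obtain ⟨hnotmem, hndt⟩ := hnd'
    have hkey : ∀ x ∈ μ.tail, x + 1 ≤ μ.headI := by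
      intro x hx
      have := le_headI hsort (htail x hx)
      have : x ≠ μ.headI := fun he => hnotmem (he ▸ hx)
      have := le_headI hsort (htail x hx)
      omega
    have hperm : μ.headI + μ.length - 1 = n - 1 := hper
    have hlt : μ.tail.length = μ.length - 1 := by rw [eq_cons hne]; simp
    constructor
    · refine ⟨part_cons.mpr ⟨fun x hx => by have := hkey x hx; omega, hsort',
        by omega, fun x hx => hpos x (htail x hx)⟩, by rw [perim_cons]; omega,
        List.nodup_cons.mpr ⟨fun hmem => by have := hkey _ hmem; omega, hndt⟩⟩
    · simp only [List.tail_cons, List.headI_cons]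
      rintro ⟨htne, habs⟩
      have := hkey _ (headI_mem htne)
      omega

theorem finite_bdd (n : ℕ) : {l : List ℕ | l.length ≤ n ∧ ∀ x ∈ l, x ≤ n}.Finite := by
  have h := (List.finite_length_le (Fin (n+1)) n).image (List.map Fin.val)
  apply h.subset
  rintro l ⟨hl, he⟩
  refine ⟨l.map (fun x => (⟨min x n, by omega⟩ : Fin (n+1))), by simpa using hl, ?_⟩
  rw [List.map_map]
  conv_rhs => rw [← List.map_id l]
  exact List.map_congr_left fun x hx => by simp [Nat.min_eq_left (he x hx)]

lemma sub_bdd {n : ℕ} {l : List ℕ} (hp : IsPartition l) (hper : perim l = n) :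
    l.length ≤ n ∧ ∀ x ∈ l, x ≤ n := by
  obtain ⟨hne, hsort, hpos⟩ := hp
  cases l with
  | nil => simp at hne
  | cons h t =>
    rw [perim_cons] at hper
    have hh : 0 < h := hpos h (by simp)
    constructor
    · simp; omega
    · intro x hx
      have := le_headI hsort hx
      simp at this; omega

lemma O_finite (n : ℕ) : (Oset n).Finite :=
  (finite_bdd n).subset fun _ ⟨hp, hper, _⟩ => sub_bdd hp hper

lemma D_finite (n : ℕ) : (Dset n).Finite :=
  (finite_bdd n).subset fun _ ⟨hp, hper, _⟩ => sub_bdd hp hper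

lemma key {S T₁ T₂ : Set (List ℕ)} {P : List ℕ → Prop} {f g : List ℕ → List ℕ}
    (hS : S.Finite)
    (h1 : {l ∈ S | P l} = f '' T₁) (h2 : {l ∈ S | ¬ P l} = g '' T₂)
    (hf : Set.InjOn f T₁) (hg : Set.InjOn g T₂) :
    S.ncard = T₁.ncard + T₂.ncard := by
  have hu : S = {l ∈ S | P l} ∪ {l ∈ S | ¬ P l} := by ext x; simp; tauto
  have hd : Disjoint {l ∈ S | P l} {l ∈ S | ¬ P l} := by
    rw [Set.disjoint_iff]
    rintro x ⟨⟨_, hx⟩, ⟨_, hnx⟩⟩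
    exact absurd hx hnx
  rw [hu, Set.ncard_union_eq hd (hS.subset (Set.sep_subset _ _)) (hS.subset (Set.sep_subset _ _)),
    h1, h2, Set.ncard_image_of_injOn hf, Set.ncard_image_of_injOn hg]

lemma injOn_consHead {S : Set (List ℕ)} : Set.InjOn (fun t : List ℕ => t.headI :: t) S :=
  fun _ _ _ _ h => by simpa using congrArg List.tail h

lemma injOn_consHead1 {S : Set (List ℕ)} : Set.InjOn (fun t : List ℕ => (t.headI + 1) :: t) S :=
  fun _ _ _ _ h => by simpa using congrArg List.tail h

lemma injOn_headTail (c : ℕ) {S : Set (List ℕ)} (hS : ∀ l ∈ S, l ≠ []) :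
    Set.InjOn (fun μ : List ℕ => (μ.headI + c) :: μ.tail) S := by
  intro a ha b hb h
  simp only [List.cons.injEq] at h
  rw [eq_cons (hS a ha), eq_cons (hS b hb), h.2]
  congr 1
  omega

lemma O_rec (n : ℕ) (hn : 2 ≤ n) :
    (Oset n).ncard = (Oset (n-1)).ncard + (Oset (n-2)).ncard :=
  key (O_finite n) (O_A n hn) (O_B n hn) injOn_consHead
    (injOn_headTail 2 fun _ hl => hl.1.1)

lemma D_rec (n : ℕ) (hn : 2 ≤ n) :
    (Dset n).ncard = (Dset (n-2)).ncard + (Dset (n-1)).ncard :=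
  key (D_finite n) (D_A n hn) (D_B n hn) injOn_consHead1
    (injOn_headTail 1 fun _ hl => hl.1.1)

lemma O_zero : Oset 0 = ∅ := by
  ext l
  simp only [Set.mem_empty_iff_false, iff_false]
  rintro ⟨⟨hne, _, hpos⟩, hper, _⟩
  cases l with
  | nil => exact hne rfl
  | cons h t =>
    rw [perim_cons] at hper
    have := hpos h (by simp)
    omega

lemma D_zero : Dset 0 = ∅ := by
  ext l
  simp only [Set.mem_empty_iff_false, iff_false]
  rintro ⟨⟨hne, _, hpos⟩, hper, _⟩
  cases l with
  | nil => exact hne rfl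
  | cons h t =>
    rw [perim_cons] at hper
    have := hpos h (by simp)
    omega

lemma O_one : Oset 1 = {[1]} := by
  ext l
  constructor
  · rintro ⟨⟨hne, _, hpos⟩, hper, _⟩
    cases l with
    | nil => exact absurd rfl hne
    | cons h t =>
      rw [perim_cons] at hper
      have := hpos h (by simp)
      have ht : t = [] := by
        rcases List.eq_nil_or_concat t with rfl | _
        · rfl
        · exfalso
          have : t ≠ [] := by rintro rfl; simp_all
          have := List.length_pos_iff.mpr this
          omega
      subst ht
      have : h = 1 := by simp at hper; omega
      simp [this]
  · rintro rfl
    exact ⟨⟨by simp, by simp, by simp⟩, by simp [perim], by simp⟩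

lemma D_one : Dset 1 = {[1]} := by
  ext l
  constructor
  · rintro ⟨⟨hne, _, hpos⟩, hper, _⟩
    cases l with
    | nil => exact absurd rfl hne
    | cons h t =>
      rw [perim_cons] at hper
      have := hpos h (by simp)
      have ht : t = [] := by
        rcases List.eq_nil_or_concat t with rfl | _
        · rfl
        · exfalso
          have : t ≠ [] := by rintro rfl; simp_all
          have := List.length_pos_iff.mpr this
          omega
      subst ht
      have : h = 1 := by simp at hper; omega
      simp [this]
  · rintro rfl
    exact ⟨⟨by simp, by simp, by simp⟩, by simp [perim], by simp⟩

lemma OD_card (n : ℕ) : (Oset n).ncard = (Dset n).ncard := by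
  induction n using Nat.strong_induction_on with
  | _ n ih =>
    match n with
    | 0 => rw [O_zero, D_zero]
    | 1 => rw [O_one, D_one]
    | (m+2) =>
      have hn : 2 ≤ m + 2 := by omega
      rw [O_rec _ hn, D_rec _ hn, ih (m+2-1) (by omega), ih (m+2-2) (by omega)]
      omega

theorem odd_eq_distinct_perimeter (n : ℕ) (hn : 1 ≤ n) :
    {l : List ℕ | IsPartition l ∧ perim l = n ∧ ∀ x ∈ l, Odd x}.ncard =
    {l : List ℕ | IsPartition l ∧ perim l = n ∧ l.Nodup}.ncard :=
  OD_card n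
end

section
/- For every positive integer n and every nonnegative integer k, the number of partitions with perimeter n having exactly k repeated parts equals the number of partitions with perimeter n having exactly k even parts. -/
/-! ### Word encoding of partitions -/

/-- Decode a boundary word into the (increasing) list of parts:
each `true` emits the current count of `false`s (plus accumulator). -/
def wparts : ℕ → List Bool → List ℕ
  | _, [] => []
  | h, false :: t => wparts (h+1) t
  | h, true :: t => h :: wparts h t

/-- The partition corresponding to a free word `w`. -/
def wP (w : List Bool) : List ℕ := (wparts 1 (w ++ [true])).reverse

/-- Encode an increasing list of parts as a boundary word. -/
def wenc : ℕ → List ℕ → List Bool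
  | _, [] => []
  | p, a :: t => List.replicate (a - p) false ++ true :: wenc a t

/-- Count of adjacent `true,true` pairs, with state = previous letter. -/
def rcnt : Bool → List Bool → ℕ
  | _, [] => 0
  | s, a :: t => (if s && a then 1 else 0) + rcnt a t

/-- Count of `true`s occurring at even `false`-prefix parity (state = parity even). -/
def ecnt : Bool → List Bool → ℕ
  | _, [] => 0
  | s, false :: t => ecnt (!s) t
  | s, true :: t => (if s then 1 else 0) + ecnt s t

/-- The statistic-transferring bijection on words. -/
def Phi : Bool → List Bool → List Bool
  | _, [] => []
  | s, a :: t => (if s then a else !a) :: Phi a t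

/-- Inverse of `Phi`. -/
def Psi : Bool → List Bool → List Bool
  | _, [] => []
  | s, b :: t => (if s then b else !b) :: Psi (if s then b else !b) t

/-- Count of adjacent equal pairs in a list of naturals. -/
def adjCnt : List ℕ → ℕ
  | [] => 0
  | [_] => 0
  | a :: b :: t => (if a = b then 1 else 0) + adjCnt (b :: t)

/-! ### Basic lemmas on `wparts` -/

lemma wparts_ge : ∀ (v : List Bool) (h : ℕ), ∀ x ∈ wparts h v, h ≤ x := by
  intro v
  induction v with
  | nil => intro h x hx; simp [wparts] at hx
  | cons a t ih =>
    intro h x hx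
    cases a with
    | false =>
      have := ih (h+1) x (by simpa [wparts] using hx)
      omega
    | true =>
      simp only [wparts, List.mem_cons] at hx
      rcases hx with rfl | hx
      · omega
      · exact ih h x hx

lemma wparts_replicate (d : ℕ) (h : ℕ) (v : List Bool) :
    wparts h (List.replicate d false ++ v) = wparts (h + d) v := by
  induction d generalizing h with
  | zero => simp [wparts]
  | succ d ih =>
    have : h + (d + 1) = (h + 1) + d := by omega
    rw [this, List.replicate_succ, List.cons_append]
    show wparts h (false :: (List.replicate d false ++ v)) = _
    rw [show wparts h (false :: (List.replicate d false ++ v))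
        = wparts (h+1) (List.replicate d false ++ v) from rfl, ih]

lemma wparts_sorted : ∀ (v : List Bool) (h : ℕ), (wparts h v).Pairwise (· ≤ ·) := by
  intro v
  induction v with
  | nil => intro h; simp [wparts]
  | cons a t ih =>
    intro h
    cases a with
    | false => exact ih (h+1)
    | true =>
      exact List.Pairwise.cons (fun x hx => wparts_ge t h x hx) (ih h)

lemma wparts_ne_nil : ∀ (w : List Bool) (h : ℕ), wparts h (w ++ [true]) ≠ [] := by
  intro w
  induction w with
  | nil => intro h; simp [wparts]
  | cons a t ih =>
    intro h
    cases a with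
    | false => exact ih (h+1)
    | true => simp [wparts]

lemma wparts_length : ∀ (v : List Bool) (h : ℕ),
    (wparts h v).length = v.count true := by
  intro v
  induction v with
  | nil => intro h; simp [wparts]
  | cons a t ih =>
    intro h
    cases a with
    | false =>
      show (wparts (h+1) t).length = _
      rw [ih (h+1)]
      simp [List.count_cons]
    | true =>
      show (h :: wparts h t).length = _
      rw [List.length_cons, ih h]
      simp [List.count_cons]

lemma wparts_concat : ∀ (w : List Bool) (h : ℕ),
    ∃ y, wparts h (w ++ [true]) = y ++ [h + w.count false] := by
  intro w
  induction w with
  | nil => intro h; exact ⟨[], by simp [wparts]⟩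
  | cons a t ih =>
    intro h
    cases a with
    | false =>
      obtain ⟨y, hy⟩ := ih (h+1)
      refine ⟨y, ?_⟩
      show wparts (h+1) (t ++ [true]) = _
      rw [hy]
      have : h + 1 + List.count false t = h + List.count false (false :: t) := by
        simp [List.count_cons]; omega
      rw [this]
    | true =>
      obtain ⟨y, hy⟩ := ih h
      refine ⟨h :: y, ?_⟩
      show h :: wparts h (t ++ [true]) = _
      rw [hy]
      have : h + List.count false t = h + List.count false (true :: t) := by
        simp [List.count_cons]
      rw [this]
      simp

/-! ### Round trips between `wparts` and `wenc` -/

lemma wparts_wenc : ∀ (t : List ℕ) (p : ℕ), List.Chain (· ≤ ·) p t →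
    wparts p (wenc p t) = t := by
  intro t
  induction t with
  | nil => intro p _; simp [wenc, wparts]
  | cons a t ih =>
    intro p hc
    unfold List.Chain at hc; rw [List.chain_cons] at hc
    obtain ⟨hpa, hc⟩ := hc
    show wparts p (List.replicate (a - p) false ++ true :: wenc a t) = _
    rw [wparts_replicate]
    have : p + (a - p) = a := by omega
    rw [this]
    show a :: wparts a (wenc a t) = _
    rw [ih a hc]

lemma wenc_cons_of_ge (p a : ℕ) (t : List ℕ) (h : p + 1 ≤ a) :
    wenc p (a :: t) = false :: wenc (p+1) (a :: t) := by
  show List.replicate (a - p) false ++ true :: wenc a t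
      = false :: (List.replicate (a - (p+1)) false ++ true :: wenc a t)
  have : a - p = (a - (p+1)) + 1 := by omega
  rw [this, List.replicate_succ, List.cons_append]

lemma wenc_wparts : ∀ (w : List Bool) (h : ℕ),
    wenc h (wparts h (w ++ [true])) = w ++ [true] := by
  intro w
  induction w with
  | nil =>
    intro h
    show wenc h [h] = [true]
    show List.replicate (h - h) false ++ true :: wenc h [] = [true]
    simp [wenc]
  | cons a t ih =>
    intro h
    cases a with
    | false =>
      show wenc h (wparts (h+1) (t ++ [true])) = false :: (t ++ [true])
      rcases hm : wparts (h+1) (t ++ [true]) with _ | ⟨b, m⟩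
      · exact absurd hm (wparts_ne_nil t (h+1))
      · have hb : h + 1 ≤ b := by
          apply wparts_ge (t ++ [true]) (h+1)
          rw [hm]; exact List.mem_cons_self
        rw [wenc_cons_of_ge h b m hb, ← hm, ih (h+1)]
    | true =>
      show wenc h (h :: wparts h (t ++ [true])) = true :: (t ++ [true])
      show List.replicate (h - h) false ++ true :: wenc h (wparts h (t ++ [true]))
          = true :: (t ++ [true])
      rw [Nat.sub_self, List.replicate_zero, List.nil_append, ih h]

/-! ### repStat equals adjCnt -/

lemma repStat_cons_cons (a b : ℕ) (t : List ℕ) :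
    repStat (a :: b :: t) = (if a = b then 1 else 0) + repStat (b :: t) := by
  unfold repStat
  simp only [List.length_cons, Nat.add_sub_cancel]
  rw [List.range_succ_eq_map, List.filter_cons]
  simp only [List.getD_cons_zero, List.getD_cons_succ]
  rw [List.filter_map]
  by_cases hab : a = b <;>
    simp [hab, Function.comp_def, Nat.add_comm]

lemma repStat_eq_adjCnt : ∀ l : List ℕ, repStat l = adjCnt l := by
  intro l
  induction l with
  | nil => rfl
  | cons a t ih =>
    cases t with
    | nil => rfl
    | cons b t' =>
      rw [repStat_cons_cons, ih]
      rfl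

lemma adjCnt_concat : ∀ (l : List ℕ) (x : ℕ),
    adjCnt (l ++ [x]) = adjCnt l + (if l.getLast? = some x then 1 else 0) := by
  intro l
  induction l with
  | nil => intro x; simp [adjCnt]
  | cons b t ih =>
    intro x
    cases t with
    | nil => simp [adjCnt]
    | cons c t' =>
      show adjCnt (b :: c :: (t' ++ [x])) = _
      have : adjCnt (b :: c :: (t' ++ [x]))
          = (if b = c then 1 else 0) + adjCnt ((c :: t') ++ [x]) := rfl
      rw [this, ih x]
      have hl : (b :: c :: t').getLast? = (c :: t').getLast? := by simp
      rw [hl]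
      show _ = (if b = c then 1 else 0) + adjCnt (c :: t') + _
      omega

lemma adjCnt_cons (a : ℕ) (t : List ℕ) :
    adjCnt (a :: t) = (if t.head? = some a then 1 else 0) + adjCnt t := by
  cases t with
  | nil => simp [adjCnt]
  | cons b t' =>
    show (if a = b then 1 else 0) + adjCnt (b :: t') = _
    by_cases hab : a = b <;> simp [hab, eq_comm]

lemma adjCnt_reverse : ∀ l : List ℕ, adjCnt l.reverse = adjCnt l := by
  intro l
  induction l with
  | nil => rfl
  | cons a t ih =>
    rw [List.reverse_cons, adjCnt_concat, ih, List.getLast?_reverse, adjCnt_cons]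
    omega

/-! ### Word statistics -/

lemma adjCnt_wparts : ∀ (v : List Bool) (h : ℕ),
    adjCnt (wparts h v) = rcnt false v ∧ adjCnt (h :: wparts h v) = rcnt true v := by
  intro v
  induction v with
  | nil => intro h; constructor <;> simp [wparts, adjCnt, rcnt]
  | cons a t ih =>
    intro h
    cases a with
    | false =>
      constructor
      · show adjCnt (wparts (h+1) t) = rcnt false (false :: t)
        rw [(ih (h+1)).1]
        simp [rcnt]
      · show adjCnt (h :: wparts (h+1) t) = rcnt true (false :: t)
        have h2 : rcnt true (false :: t) = rcnt false t := by simp [rcnt]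
        rw [h2, ← (ih (h+1)).1]
        rcases hm : wparts (h+1) t with _ | ⟨b, m⟩
        · simp [adjCnt]
        · have hb : h + 1 ≤ b := by
            apply wparts_ge t (h+1)
            rw [hm]; exact List.mem_cons_self
          show (if h = b then 1 else 0) + adjCnt (b :: m) = adjCnt (b :: m)
          have : h ≠ b := by omega
          simp [this]
    | true =>
      constructor
      · show adjCnt (h :: wparts h t) = rcnt false (true :: t)
        rw [(ih h).2]
        simp [rcnt]
      · show adjCnt (h :: h :: wparts h t) = rcnt true (true :: t)
        have : adjCnt (h :: h :: wparts h t) = 1 + adjCnt (h :: wparts h t) := by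
          show (if h = h then 1 else 0) + _ = _
          simp
        rw [this, (ih h).2]
        rfl

lemma countP_even_wparts : ∀ (v : List Bool) (h : ℕ),
    (wparts h v).countP (fun x => x % 2 = 0) = ecnt (decide (h % 2 = 0)) v := by
  intro v
  induction v with
  | nil => intro h; simp [wparts, ecnt]
  | cons a t ih =>
    intro h
    cases a with
    | false =>
      show (wparts (h+1) t).countP _ = ecnt (decide (h % 2 = 0)) (false :: t)
      rw [ih (h+1)]
      have : ecnt (decide (h % 2 = 0)) (false :: t) = ecnt (!decide (h % 2 = 0)) t := rfl
      rw [this]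
      congr 1
      by_cases hp : h % 2 = 0
      · have : (h+1) % 2 = 1 := by omega
        simp [hp, this]
      · have : (h+1) % 2 = 0 := by omega
        simp [hp, this]
    | true =>
      show (h :: wparts h t).countP _ = ecnt (decide (h % 2 = 0)) (true :: t)
      rw [List.countP_cons, ih h]
      have : ecnt (decide (h % 2 = 0)) (true :: t)
          = (if decide (h % 2 = 0) then 1 else 0) + ecnt (decide (h % 2 = 0)) t := rfl
      rw [this]
      by_cases hp : h % 2 = 0 <;> simp [hp] <;> omega

/-! ### The bijection `Phi` -/

lemma Phi_length : ∀ (t : List Bool) (s : Bool), (Phi s t).length = t.length := by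
  intro t
  induction t with
  | nil => intro s; rfl
  | cons a t ih => intro s; simp [Phi, ih]

lemma Psi_length : ∀ (t : List Bool) (s : Bool), (Psi s t).length = t.length := by
  intro t
  induction t with
  | nil => intro s; rfl
  | cons a t ih => intro s; simp [Psi, ih]

lemma Psi_Phi : ∀ (t : List Bool) (s : Bool), Psi s (Phi s t) = t := by
  intro t
  induction t with
  | nil => intro s; rfl
  | cons a t ih =>
    intro s
    cases s <;> cases a <;> simp [Phi, Psi, ih]

lemma Phi_Psi : ∀ (t : List Bool) (s : Bool), Phi s (Psi s t) = t := by
  intro t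
  induction t with
  | nil => intro s; rfl
  | cons b t ih =>
    intro s
    cases s <;> cases b <;> simp [Phi, Psi, ih]

lemma rcnt_eq_ecnt_Phi : ∀ (t : List Bool) (s : Bool),
    rcnt s (t ++ [true]) = ecnt s (Phi s t ++ [true]) := by
  intro t
  induction t with
  | nil => intro s; cases s <;> simp [rcnt, ecnt, Phi]
  | cons a t ih =>
    intro s
    cases s <;> cases a <;>
      simp [Phi, rcnt, ecnt, ih]

/-! ### Partition-level lemmas for `wP` -/

lemma count_true_add_count_false (w : List Bool) :
    w.count true + w.count false = w.length := by
  induction w with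
  | nil => rfl
  | cons a t ih =>
    cases a <;> simp [List.count_cons] <;> omega

lemma wP_isPartition (w : List Bool) : IsPartition (wP w) := by
  refine ⟨?_, ?_, ?_⟩
  · simp only [wP, ne_eq, List.reverse_eq_nil_iff]
    exact wparts_ne_nil w 1
  · unfold wP
    rw [List.pairwise_reverse]
    exact wparts_sorted _ 1
  · intro x hx
    rw [wP, List.mem_reverse] at hx
    have := wparts_ge _ 1 x hx
    omega

lemma wP_perim (w : List Bool) : perim (wP w) = w.length + 1 := by
  obtain ⟨y, hy⟩ := wparts_concat w 1
  have hhead : (wP w).headI = 1 + w.count false := by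
    rw [wP, hy, List.reverse_append]
    rfl
  have hlen : (wP w).length = w.count true + 1 := by
    rw [wP, List.length_reverse, wparts_length]
    simp
  rw [perim, hhead, hlen]
  have := count_true_add_count_false w
  omega

lemma wP_repStat (w : List Bool) : repStat (wP w) = rcnt false (w ++ [true]) := by
  rw [repStat_eq_adjCnt, wP, adjCnt_reverse]
  exact (adjCnt_wparts _ 1).1

lemma wP_evenStat (w : List Bool) : evenStat (wP w) = ecnt false (w ++ [true]) := by
  rw [evenStat, wP, List.countP_reverse]
  have := countP_even_wparts (w ++ [true]) 1
  simpa using this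

lemma wP_injective : Function.Injective wP := by
  intro w w' h
  have h2 : wparts 1 (w ++ [true]) = wparts 1 (w' ++ [true]) := by
    have := congrArg List.reverse h
    simpa [wP] using this
  have h3 : w ++ [true] = w' ++ [true] := by
    rw [← wenc_wparts w 1, ← wenc_wparts w' 1, h2]
  exact List.append_inj_left' h3 rfl

lemma wenc_concat : ∀ (t : List ℕ) (p a : ℕ), ∃ w, wenc p (a :: t) = w ++ [true] := by
  intro t
  induction t with
  | nil =>
    intro p a
    exact ⟨List.replicate (a - p) false, by simp [wenc]⟩
  | cons b t ih =>
    intro p a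
    obtain ⟨w, hw⟩ := ih a b
    refine ⟨List.replicate (a - p) false ++ true :: w, ?_⟩
    show List.replicate (a - p) false ++ true :: wenc a (b :: t) = _
    rw [hw]
    simp

lemma exists_wP {l : List ℕ} (hl : IsPartition l) :
    ∃ w, wP w = l ∧ w.length + 1 = perim l := by
  obtain ⟨hne, hsort, hpos⟩ := hl
  have hchain : List.Chain (· ≤ ·) 1 l.reverse := by
    unfold List.Chain; rw [List.isChain_iff_pairwise]
    refine List.Pairwise.cons ?_ ?_
    · intro x hx
      exact hpos x (List.mem_reverse.mp hx)
    · rw [List.pairwise_reverse]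
      exact hsort
  rcases hm : l.reverse with _ | ⟨a, m⟩
  · exact absurd (List.reverse_eq_nil_iff.mp hm) hne
  obtain ⟨w, hw⟩ := wenc_concat m 1 a
  refine ⟨w, ?_, ?_⟩
  · have : wP w = (wparts 1 (wenc 1 (a :: m))).reverse := by rw [wP, ← hw]
    rw [this, wparts_wenc _ 1 (hm ▸ hchain), ← hm, List.reverse_reverse]
  · have hPw : wP w = l := by
      have : wP w = (wparts 1 (wenc 1 (a :: m))).reverse := by rw [wP, ← hw]
      rw [this, wparts_wenc _ 1 (hm ▸ hchain), ← hm, List.reverse_reverse]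
    rw [← hPw, wP_perim]

/-! ### Main theorem -/

theorem rep_eq_even_perimeter (n k : ℕ) (hn : 1 ≤ n) :
    {l : List ℕ | IsPartition l ∧ perim l = n ∧ repStat l = k}.ncard =
    {l : List ℕ | IsPartition l ∧ perim l = n ∧ evenStat l = k}.ncard := by
  set Wr : Set (List Bool) := {w | w.length = n - 1 ∧ rcnt false (w ++ [true]) = k} with hWr
  set We : Set (List Bool) := {w | w.length = n - 1 ∧ ecnt false (w ++ [true]) = k} with hWe
  have hSr : {l : List ℕ | IsPartition l ∧ perim l = n ∧ repStat l = k} = wP '' Wr := by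
    ext l
    constructor
    · rintro ⟨hpart, hperim, hrep⟩
      obtain ⟨w, hwl, hwp⟩ := exists_wP hpart
      refine ⟨w, ⟨?_, ?_⟩, hwl⟩
      · omega
      · rw [← wP_repStat, hwl, hrep]
    · rintro ⟨w, ⟨hlen, hstat⟩, rfl⟩
      exact ⟨wP_isPartition w, by rw [wP_perim, hlen]; omega, by rw [wP_repStat, hstat]⟩
  have hSe : {l : List ℕ | IsPartition l ∧ perim l = n ∧ evenStat l = k} = wP '' We := by
    ext l
    constructor
    · rintro ⟨hpart, hperim, heven⟩
      obtain ⟨w, hwl, hwp⟩ := exists_wP hpart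
      refine ⟨w, ⟨?_, ?_⟩, hwl⟩
      · omega
      · rw [← wP_evenStat, hwl, heven]
    · rintro ⟨w, ⟨hlen, hstat⟩, rfl⟩
      exact ⟨wP_isPartition w, by rw [wP_perim, hlen]; omega, by rw [wP_evenStat, hstat]⟩
  have hWeWr : We = Phi false '' Wr := by
    ext w
    constructor
    · rintro ⟨hlen, hstat⟩
      refine ⟨Psi false w, ⟨?_, ?_⟩, Phi_Psi w false⟩
      · rw [Psi_length]; exact hlen
      · rw [rcnt_eq_ecnt_Phi, Phi_Psi]
        exact hstat
    · rintro ⟨u, ⟨hlen, hstat⟩, rfl⟩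
      refine ⟨by rw [Phi_length]; exact hlen, ?_⟩
      rw [← rcnt_eq_ecnt_Phi]
      exact hstat
  have hPhiInj : Function.Injective (Phi false) :=
    Function.LeftInverse.injective (fun t => Psi_Phi t false)
  rw [hSr, hSe, hWeWr,
    Set.ncard_image_of_injOn (wP_injective.injOn),
    Set.ncard_image_of_injOn (wP_injective.injOn),
    Set.ncard_image_of_injOn (hPhiInj.injOn)]
end

section
/- Let A(n,k) be the number of partitions with perimeter n having exactly k repeated parts. Then for all n ≥ 3 and k ≥ 1, A(n,k) = A(n−1,k) + A(n−1,k−1) + A(n−2,k) − A(n−2,k−1). -/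
/-- A(n,k): number of partitions with perimeter n and exactly k repeated parts. -/
noncomputable def A (n k : ℕ) : ℕ :=
  {l : List ℕ | IsPartition l ∧ perim l = n ∧ repStat l = k}.ncard

namespace ARec
open List

lemma headI_mem {l : List ℕ} (h : l ≠ []) : l.headI ∈ l := by
  cases l with
  | nil => simp at h
  | cons a t => simp

lemma mem_le_headI {l : List ℕ} (hs : l.Pairwise (· ≥ ·)) {x : ℕ} (hx : x ∈ l) : x ≤ l.headI := by
  cases l with
  | nil => simp at hx
  | cons a t =>
    rcases List.mem_cons.mp hx with rfl | hx
    · simp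
    · exact List.rel_of_pairwise_cons hs hx

lemma getLast_le {l : List ℕ} (hs : l.Pairwise (· ≥ ·)) (h : l ≠ []) :
    ∀ x ∈ l, l.getLast h ≤ x := by
  induction l with
  | nil => simp at h
  | cons a t ih =>
    intro x hx
    cases t with
    | nil => simp at hx; simp [hx]
    | cons b s =>
      rw [List.getLast_cons (by simp)]
      rcases List.mem_cons.mp hx with rfl | hx
      · exact List.rel_of_pairwise_cons hs (List.getLast_mem (by simp))
      · exact ih (List.pairwise_cons.mp hs).2 (by simp) x hx

lemma repStat_congr {l l' : List ℕ} (hlen : l'.length = l.length)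
    (h : ∀ i, i + 1 < l.length →
      ((l'.getD i 0 = l'.getD (i + 1) 0) ↔ (l.getD i 0 = l.getD (i + 1) 0))) :
    repStat l' = repStat l := by
  unfold repStat
  rw [hlen]
  congr 1
  apply List.filter_congr
  intro i hi
  simp only [List.mem_range] at hi
  exact decide_eq_decide.mpr (h i (by omega))

lemma repStat_map_add_one (l : List ℕ) : repStat (l.map (· + 1)) = repStat l := by
  apply repStat_congr (by simp)
  intro i hi
  have h1 : i < l.length := by omega
  rw [List.getD_eq_getElem _ _ (by simpa using h1), List.getD_eq_getElem _ _ (by simpa using hi),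
    List.getD_eq_getElem _ _ h1, List.getD_eq_getElem _ _ hi]
  simp

lemma repStat_append_one {l : List ℕ} (h : l ≠ []) (x : ℕ) :
    repStat (l ++ [x]) = repStat l + (if l.getLast h = x then 1 else 0) := by
  have hL : 1 ≤ l.length := List.length_pos_iff.mpr h
  unfold repStat
  have hlen : (l ++ [x]).length - 1 = l.length := by simp
  rw [hlen]
  have : l.length = (l.length - 1) + 1 := by omega
  rw [this, List.range_succ, List.filter_append, List.length_append]
  congr 1
  · rw [← this]
    apply congrArg List.length
    apply List.filter_congr
    intro i hi
    simp only [List.mem_range] at hi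
    have h1 : i < l.length := by omega
    have h2 : i + 1 < l.length := by omega
    rw [List.getD_eq_getElem (l ++ [x]) _ (by simp; omega),
      List.getD_eq_getElem (l ++ [x]) _ (by simp; omega),
      List.getElem_append_left h1, List.getElem_append_left h2,
      List.getD_eq_getElem l _ h1, List.getD_eq_getElem l _ h2]
  · have e1 : (l ++ [x]).getD (l.length - 1) 0 = l.getLast h := by
      rw [List.getD_eq_getElem (l ++ [x]) _ (by simp),
        List.getElem_append_left (by omega), List.getLast_eq_getElem]
    have e2 : (l ++ [x]).getD (l.length - 1 + 1) 0 = x := by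
      rw [show l.length - 1 + 1 = l.length by omega,
        List.getD_eq_getElem (l ++ [x]) _ (by simp),
        List.getElem_append_right (le_refl _)]
      simp
    simp only [List.filter, e1, e2]
    by_cases hx : l.getLast h = x <;> simp [hx]

end ARec

def Pset (n k : ℕ) : Set (List ℕ) := {l | IsPartition l ∧ perim l = n ∧ repStat l = k}

lemma headI_append_one {l : List ℕ} (h : l ≠ []) : (l ++ [1]).headI = l.headI := by
  cases l with
  | nil => simp at h
  | cons a t => simp

lemma perim_eq_iff {l : List ℕ} (h : IsPartition l) {n : ℕ} :
    perim l = n ↔ l.headI + l.length = n + 1 := by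
  obtain ⟨hne, hs, hpos⟩ := h
  have h1 : 0 < l.headI := hpos _ (ARec.headI_mem hne)
  have h2 : 0 < l.length := List.length_pos_iff.mpr hne
  unfold perim
  omega

lemma succ_spec {l : List ℕ} (h : IsPartition l) :
    IsPartition (l.map (· + 1)) ∧ perim (l.map (· + 1)) = perim l + 1 ∧
      repStat (l.map (· + 1)) = repStat l ∧ (1 : ℕ) ∉ l.map (· + 1) := by
  obtain ⟨hne, hs, hpos⟩ := h
  have hpart : IsPartition (l.map (· + 1)) := by
    refine ⟨by simpa using hne, ?_, ?_⟩
    · exact List.Pairwise.map _ (fun a b hab => by omega) hs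
    · intro x hx
      simp only [List.mem_map] at hx
      omega
  refine ⟨hpart, ?_, ARec.repStat_map_add_one l, ?_⟩
  · rw [perim_eq_iff hpart]
    have : perim l = perim l := rfl
    rw [perim_eq_iff ⟨hne, hs, hpos⟩] at this
    have hh : (l.map (· + 1)).headI = l.headI + 1 := by
      cases l with
      | nil => simp at hne
      | cons a t => simp
    rw [hh, List.length_map]
    omega
  · intro hmem
    simp only [List.mem_map] at hmem
    obtain ⟨y, hy, hy1⟩ := hmem
    have := hpos y hy
    omega

lemma Tset_eq {m k : ℕ} (hm : 2 ≤ m) :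
    {l | l ∈ Pset m k ∧ (1 : ℕ) ∉ l} = (List.map (· + 1)) '' Pset (m - 1) k := by
  ext l
  constructor
  · rintro ⟨⟨⟨hne, hs, hpos⟩, hp, hr⟩, h1⟩
    have hall : ∀ x ∈ l, 2 ≤ x := by
      intro x hx
      have := hpos x hx
      have hx1 : x ≠ 1 := fun e => h1 (e ▸ hx)
      omega
    refine ⟨l.map (· - 1), ?_, ?_⟩
    swap
    · rw [List.map_map]
      have : ∀ x ∈ l, (((· + 1) ∘ (· - 1)) x) = id x := by
        intro x hx
        have := hall x hx
        simp only [Function.comp_apply, id_eq]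
        omega
      rw [List.map_congr_left this, List.map_id]
    · have hpart' : IsPartition (l.map (· - 1)) := by
        refine ⟨by simpa using hne, ?_, ?_⟩
        · exact List.Pairwise.map _ (fun a b hab => by omega) hs
        · intro x hx
          simp only [List.mem_map] at hx
          obtain ⟨y, hy, rfl⟩ := hx
          have := hall y hy
          omega
      have heq : (l.map (· - 1)).map (· + 1) = l := by
        rw [List.map_map]
        have : ∀ x ∈ l, (((· + 1) ∘ (· - 1)) x) = id x := by
          intro x hx
          have := hall x hx
          simp only [Function.comp_apply, id_eq]
          omega
        rw [List.map_congr_left this, List.map_id]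
      obtain ⟨_, hp', hr', _⟩ := succ_spec hpart'
      rw [heq] at hp' hr'
      exact ⟨hpart', by omega, by omega⟩
  · rintro ⟨l', ⟨hpart', hp', hr'⟩, rfl⟩
    obtain ⟨hpart, hp, hr, h1⟩ := succ_spec hpart'
    exact ⟨⟨hpart, by omega, by omega⟩, h1⟩

lemma append_spec {l : List ℕ} (h : IsPartition l) :
    IsPartition (l ++ [1]) ∧ perim (l ++ [1]) = perim l + 1 ∧
      repStat (l ++ [1]) = repStat l + (if (1 : ℕ) ∈ l then 1 else 0) := by
  obtain ⟨hne, hs, hpos⟩ := h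
  have hpart : IsPartition (l ++ [1]) := by
    refine ⟨by simp, ?_, ?_⟩
    · rw [List.pairwise_append]
      refine ⟨hs, by simp, ?_⟩
      intro a ha b hb
      simp only [List.mem_singleton] at hb
      subst hb
      exact hpos a ha
    · intro x hx
      rcases List.mem_append.mp hx with h' | h'
      · exact hpos x h'
      · simp at h'; omega
  refine ⟨hpart, ?_, ?_⟩
  · rw [perim_eq_iff hpart, headI_append_one hne, List.length_append]
    have : perim l = perim l := rfl
    rw [perim_eq_iff ⟨hne, hs, hpos⟩] at this
    simp only [List.length_singleton]
    omega
  · rw [ARec.repStat_append_one hne 1]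
    congr 1
    have : l.getLast hne = 1 ↔ (1 : ℕ) ∈ l := by
      constructor
      · intro hg; rw [← hg]; exact List.getLast_mem hne
      · intro hmem
        have h1 := ARec.getLast_le hs hne 1 hmem
        have h2 := hpos _ (List.getLast_mem hne)
        omega
    simp only [this]

lemma Sset_eq {n k : ℕ} (hn : 3 ≤ n) (hk : 1 ≤ k) :
    {l | l ∈ Pset n k ∧ (1 : ℕ) ∈ l} =
      (· ++ [1]) '' ({l | l ∈ Pset (n - 1) (k - 1) ∧ (1 : ℕ) ∈ l} ∪
        {l | l ∈ Pset (n - 1) k ∧ (1 : ℕ) ∉ l}) := by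
  ext l
  constructor
  · rintro ⟨⟨⟨hne, hs, hpos⟩, hp, hr⟩, h1⟩
    have hlast : l.getLast hne = 1 := by
      have h1' := ARec.getLast_le hs hne 1 h1
      have h2 := hpos _ (List.getLast_mem hne)
      omega
    have hlen2 : 2 ≤ l.length := by
      rcases Nat.lt_or_ge l.length 2 with h | h
      · exfalso
        have hl1 : l.length = 1 := by
          have := List.length_pos_iff.mpr hne; omega
        have hperim := (perim_eq_iff ⟨hne, hs, hpos⟩).mp hp
        rw [hl1] at hperim
        -- headI = n, but headI ∈ l and last = 1 and length 1 means headI = 1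
        obtain ⟨a, rfl⟩ := List.length_eq_one_iff.mp hl1
        simp at hlast hperim
        omega
      · exact h
    have hdrop : l.dropLast ++ [1] = l := by
      conv_rhs => rw [← List.dropLast_append_getLast hne]
      rw [hlast]
    have hne' : l.dropLast ≠ [] := by
      intro hnil
      rw [hnil] at hdrop
      simp at hdrop
      rw [← hdrop] at hlen2
      simp at hlen2
    have hpart' : IsPartition l.dropLast := by
      refine ⟨hne', ?_, ?_⟩
      · exact List.Pairwise.sublist (List.dropLast_sublist l) hs
      · intro x hx
        exact hpos x ((List.dropLast_sublist l).subset hx)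
    obtain ⟨_, hp', hr'⟩ := append_spec hpart'
    rw [hdrop] at hp' hr'
    by_cases hmem : (1 : ℕ) ∈ l.dropLast
    · refine ⟨l.dropLast, Or.inl ⟨⟨hpart', by omega, ?_⟩, hmem⟩, hdrop⟩
      rw [hr, if_pos hmem] at hr'
      omega
    · refine ⟨l.dropLast, Or.inr ⟨⟨hpart', by omega, ?_⟩, hmem⟩, hdrop⟩
      rw [hr, if_neg hmem] at hr'
      omega
  · rintro ⟨l', hl', rfl⟩
    rcases hl' with ⟨⟨hpart', hp', hr'⟩, hmem⟩ | ⟨⟨hpart', hp', hr'⟩, hmem⟩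
    · obtain ⟨hpart, hp, hr⟩ := append_spec hpart'
      rw [if_pos hmem] at hr
      have h1 : perim (l' ++ [1]) = n := by omega
      have h2 : repStat (l' ++ [1]) = k := by omega
      exact ⟨⟨hpart, h1, h2⟩, by simp⟩
    · obtain ⟨hpart, hp, hr⟩ := append_spec hpart'
      rw [if_neg hmem] at hr
      have h1 : perim (l' ++ [1]) = n := by omega
      have h2 : repStat (l' ++ [1]) = k := by omega
      exact ⟨⟨hpart, h1, h2⟩, by simp⟩

lemma A_eq (n k : ℕ) : A n k = (Pset n k).ncard := rfl

lemma Pset_finite (n k : ℕ) : (Pset n k).Finite := by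
  apply Set.Finite.subset (((List.finite_length_le (Fin (n + 1)) n)).image (List.map Fin.val))
  rintro l ⟨⟨hne, hs, hpos⟩, hp, hr⟩
  have hperim := (perim_eq_iff ⟨hne, hs, hpos⟩).mp hp
  have hh : 0 < l.headI := hpos _ (ARec.headI_mem hne)
  have hlen : 0 < l.length := List.length_pos_iff.mpr hne
  have hbound : ∀ x ∈ l, x ≤ n := by
    intro x hx
    have := ARec.mem_le_headI hs hx
    omega
  refine ⟨l.map (fun x => (⟨min x n, by omega⟩ : Fin (n + 1))), ?_, ?_⟩
  · simp only [Set.mem_setOf_eq, List.length_map]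
    omega
  · rw [List.map_map]
    have : ∀ x ∈ l, ((Fin.val ∘ fun x => (⟨min x n, by omega⟩ : Fin (n + 1))) x) = id x := by
      intro x hx
      have := hbound x hx
      simp only [Function.comp_apply, id_eq]
      omega
    rw [List.map_congr_left this, List.map_id]

lemma Pset_split (n k : ℕ) :
    (Pset n k).ncard = {l | l ∈ Pset n k ∧ (1 : ℕ) ∈ l}.ncard +
      {l | l ∈ Pset n k ∧ (1 : ℕ) ∉ l}.ncard := by
  have hd : Disjoint {l | l ∈ Pset n k ∧ (1 : ℕ) ∈ l} {l | l ∈ Pset n k ∧ (1 : ℕ) ∉ l} := by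
    rw [Set.disjoint_left]
    rintro l ⟨_, h1⟩ ⟨_, h2⟩
    exact h2 h1
  rw [← Set.ncard_union_eq hd ((Pset_finite n k).subset (fun l hl => hl.1))
    ((Pset_finite n k).subset (fun l hl => hl.1))]
  congr 1
  ext l
  by_cases h : (1 : ℕ) ∈ l <;> simp [h]

lemma ncard_Tset {m k : ℕ} (hm : 2 ≤ m) :
    {l | l ∈ Pset m k ∧ (1 : ℕ) ∉ l}.ncard = A (m - 1) k := by
  rw [Tset_eq hm, A_eq]
  exact Set.ncard_image_of_injective _
    (List.map_injective_iff.mpr (fun a b hab => by omega))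

lemma split1 {m k : ℕ} (hm : 2 ≤ m) :
    A m k = {l | l ∈ Pset m k ∧ (1 : ℕ) ∈ l}.ncard + A (m - 1) k := by
  rw [A_eq, Pset_split, ncard_Tset hm]

lemma split2 {n k : ℕ} (hn : 3 ≤ n) (hk : 1 ≤ k) :
    A n k = ({l | l ∈ Pset (n - 1) (k - 1) ∧ (1 : ℕ) ∈ l}.ncard + A (n - 2) k) +
      A (n - 1) k := by
  rw [A_eq, Pset_split, ncard_Tset (by omega)]
  congr 1
  rw [Sset_eq hn hk,
    Set.ncard_image_of_injective _ (List.append_left_injective [1]),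
    Set.ncard_union_eq (by
      rw [Set.disjoint_left]
      rintro l ⟨_, h1⟩ ⟨_, h2⟩
      exact h2 h1)
      ((Pset_finite (n - 1) (k - 1)).subset (fun l hl => hl.1))
      ((Pset_finite (n - 1) k).subset (fun l hl => hl.1))]
  congr 1
  have h2le : (2 : ℕ) ≤ n - 1 := by omega
  rw [ncard_Tset h2le, show n - 1 - 1 = n - 2 from by omega]

theorem A_recurrence (n k : ℕ) (hn : 3 ≤ n) (hk : 1 ≤ k) :
    (A n k : ℤ) =
      A (n - 1) k + A (n - 1) (k - 1) + A (n - 2) k - A (n - 2) (k - 1) := by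
  have e1 := split2 hn hk
  have e2 := split1 (m := n - 1) (k := k - 1) (by omega)
  rw [show n - 1 - 1 = n - 2 by omega] at e2
  omega
end

section
/- Let B(n,k) be the number of partitions with perimeter n having exactly k even parts. Then for all n ≥ 3 and k ≥ 1, B(n,k) = B(n−1,k) + B(n−1,k−1) + B(n−2,k) − B(n−2,k−1). -/
/-- B(n,k): number of partitions with perimeter n and exactly k even parts. -/
noncomputable def B (n k : ℕ) : ℕ :=
  {l : List ℕ | IsPartition l ∧ perim l = n ∧ evenStat l = k}.ncard

namespace BRec

def Sp (n k : ℕ) : Set (List ℕ) := {l | IsPartition l ∧ perim l = n ∧ evenStat l = k}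

lemma B_def (n k : ℕ) : B n k = (Sp n k).ncard := rfl

lemma evenStat_cons (a : ℕ) (t : List ℕ) :
    evenStat (a :: t) = evenStat t + if a % 2 = 0 then 1 else 0 := by
  simp [evenStat, List.countP_cons]

lemma mem_le_headI {l : List ℕ} (hs : l.Pairwise (· ≥ ·)) : ∀ x ∈ l, x ≤ l.headI := by
  cases l with
  | nil => simp
  | cons a t =>
    rw [List.pairwise_cons] at hs
    intro x hx
    rcases List.mem_cons.1 hx with rfl | hx
    · simp
    · exact hs.1 x hx

lemma mem_Sp_cons {a n k : ℕ} {t : List ℕ} :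
    (a :: t) ∈ Sp n k ↔
      (∀ x ∈ t, x ≤ a) ∧ t.Pairwise (· ≥ ·) ∧ 0 < a ∧ (∀ x ∈ t, 0 < x) ∧
        a + t.length = n ∧ evenStat (a :: t) = k := by
  constructor
  · rintro ⟨⟨-, hs, hp⟩, hper, he⟩
    rw [List.pairwise_cons] at hs
    refine ⟨hs.1, hs.2, hp a (by simp), fun x hx => hp x (by simp [hx]), ?_, he⟩
    simp [perim] at hper
    omega
  · rintro ⟨h1, h2, h3, h4, h5, h6⟩
    refine ⟨⟨by simp, List.pairwise_cons.2 ⟨h1, h2⟩, ?_⟩, ?_, h6⟩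
    · intro x hx
      rcases List.mem_cons.1 hx with rfl | hx
      · exact h3
      · exact h4 x hx
    · simp [perim]; omega

lemma Sp_finite (n k : ℕ) : (Sp n k).Finite := by
  have h : Sp n k ⊆ (fun l : List (Fin (n + 1)) => l.map Fin.val) ''
      {l : List (Fin (n + 1)) | l.length ≤ n + 1} := by
    rintro l ⟨⟨hne, hs, hp⟩, hper, -⟩
    have hhead : l.headI + l.length - 1 = n := hper
    have hlen : 1 ≤ l.length := by
      cases l with
      | nil => exact absurd rfl hne
      | cons a t => simp
    have hb : ∀ x ∈ l, x ≤ n := by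
      intro x hx
      have := mem_le_headI hs x hx
      omega
    refine ⟨l.map (fun x => (⟨min x n, by omega⟩ : Fin (n + 1))), ?_, ?_⟩
    · simp only [Set.mem_setOf_eq, List.length_map]
      omega
    · simp only [List.map_map]
      conv_rhs => rw [← List.map_id l]
      refine List.map_congr_left ?_
      intro x hx
      have := hb x hx
      simp [Nat.min_eq_left this]
  exact Set.Finite.subset (Set.Finite.image _ (List.finite_length_le _ _)) h

def incr (l : List ℕ) : List ℕ := (l.headI + 1) :: l.tail
def dup (l : List ℕ) : List ℕ := l.headI :: l

def He (n k : ℕ) : Set (List ℕ) := {l ∈ Sp n k | l.headI % 2 = 0}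
def Ho (n k : ℕ) : Set (List ℕ) := {l ∈ Sp n k | l.headI % 2 = 1}

def Ae (n k : ℕ) : Set (List ℕ) :=
  {l ∈ Sp n k | (l.tail = [] ∨ l.tail.headI < l.headI) ∧ l.headI % 2 = 0}
def Ao (n k : ℕ) : Set (List ℕ) :=
  {l ∈ Sp n k | (l.tail = [] ∨ l.tail.headI < l.headI) ∧ l.headI % 2 = 1}
def De (n k : ℕ) : Set (List ℕ) :=
  {l ∈ Sp n k | l.tail ≠ [] ∧ l.tail.headI = l.headI ∧ l.headI % 2 = 0}
def Do (n k : ℕ) : Set (List ℕ) :=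
  {l ∈ Sp n k | l.tail ≠ [] ∧ l.tail.headI = l.headI ∧ l.headI % 2 = 1}

lemma incr_injOn (s : Set (List ℕ)) (hs : ∀ l ∈ s, l ≠ []) : Set.InjOn incr s := by
  intro l1 h1 l2 h2 h
  cases l1 with
  | nil => exact absurd rfl (hs _ h1)
  | cons a t =>
    cases l2 with
    | nil => exact absurd rfl (hs _ h2)
    | cons b u =>
      simp only [incr, List.headI, List.tail] at h
      obtain ⟨h1, h2⟩ := List.cons.injEq _ _ _ _ ▸ h
      simp_all

lemma dup_inj : Function.Injective dup := by
  intro l1 l2 h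
  have := congrArg List.tail h
  simpa [dup] using this

lemma mem_Sp_ne_nil {n k : ℕ} {l : List ℕ} (h : l ∈ Sp n k) : l ≠ [] := h.1.1

-- incr image lemmas
lemma Ae_eq (m k : ℕ) : Ae (m + 1) (k + 1) = incr '' Ho m k := by
  ext l
  constructor
  · rintro ⟨hl, hstrict, hpar⟩
    cases l with
    | nil => exact absurd rfl (mem_Sp_ne_nil hl)
    | cons b t =>
      rw [mem_Sp_cons] at hl
      obtain ⟨h1, h2, h3, h4, h5, h6⟩ := hl
      simp only [List.headI, List.tail] at hstrict hpar
      have hb2 : 2 ≤ b := by omega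
      refine ⟨(b - 1) :: t, ?_, ?_⟩
      · refine ⟨mem_Sp_cons.2 ⟨?_, h2, by omega, h4, by omega, ?_⟩, ?_⟩
        · intro x hx
          have hxa := h1 x hx
          have hxh := mem_le_headI h2 x hx
          rcases hstrict with h | h
          · simp [h] at hx
          · cases t with
            | nil => simp at hx
            | cons c u => simp only [List.headI] at h hxh; omega
        · rw [evenStat_cons] at h6 ⊢
          have : ¬ ((b-1) % 2 = 0) := by omega
          simp only [if_neg this]
          simp only [if_pos hpar] at h6
          omega
        · simp only [List.headI]; omega
      · simp only [incr, List.headI, List.tail]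
        congr 1
        omega
  · rintro ⟨mu, ⟨hmu, hpar⟩, rfl⟩
    cases mu with
    | nil => exact absurd rfl (mem_Sp_ne_nil hmu)
    | cons a t =>
      rw [mem_Sp_cons] at hmu
      obtain ⟨h1, h2, h3, h4, h5, h6⟩ := hmu
      simp only [List.headI] at hpar
      simp only [incr, List.headI, List.tail]
      refine ⟨mem_Sp_cons.2 ⟨fun x hx => by have := h1 x hx; omega, h2, by omega, h4, by omega, ?_⟩, ?_, ?_⟩
      · rw [evenStat_cons] at h6 ⊢
        have hne : ¬ (a % 2 = 0) := by omega
        simp only [if_neg hne] at h6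
        have : (a + 1) % 2 = 0 := by omega
        simp only [if_pos this]
        omega
      · cases t with
        | nil => simp
        | cons c u =>
          right
          have := h1 c (by simp)
          simpa using by omega
      · simp; omega

lemma Ao_eq (m k : ℕ) (hm : 1 ≤ m) : Ao (m + 1) k = incr '' He m (k + 1) := by
  ext l
  constructor
  · rintro ⟨hl, hstrict, hpar⟩
    cases l with
    | nil => exact absurd rfl (mem_Sp_ne_nil hl)
    | cons b t =>
      rw [mem_Sp_cons] at hl
      obtain ⟨h1, h2, h3, h4, h5, h6⟩ := hl
      simp only [List.headI, List.tail] at hstrict hpar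
      have hb2 : 2 ≤ b := by
        by_contra hb
        have hb1 : b = 1 := by omega
        have ht : t = [] := by
          cases t with
          | nil => rfl
          | cons c u =>
            rcases hstrict with h | h
            · simp at h
            · have := h4 c (by simp)
              simp only [List.headI] at h
              omega
        subst ht
        simp at h5
        omega
      refine ⟨(b - 1) :: t, ?_, ?_⟩
      · refine ⟨mem_Sp_cons.2 ⟨?_, h2, by omega, h4, by omega, ?_⟩, ?_⟩
        · intro x hx
          have hxh := mem_le_headI h2 x hx
          rcases hstrict with h | h
          · simp [h] at hx
          · cases t with
            | nil => simp at hx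
            | cons c u => simp only [List.headI] at h hxh; omega
        · rw [evenStat_cons] at h6 ⊢
          have hbe : ¬ (b % 2 = 0) := by omega
          have : (b - 1) % 2 = 0 := by omega
          simp only [if_pos this]
          simp only [if_neg hbe] at h6
          omega
        · simp only [List.headI]; omega
      · simp only [incr, List.headI, List.tail]
        congr 1
        omega
  · rintro ⟨mu, ⟨hmu, hpar⟩, rfl⟩
    cases mu with
    | nil => exact absurd rfl (mem_Sp_ne_nil hmu)
    | cons a t =>
      rw [mem_Sp_cons] at hmu
      obtain ⟨h1, h2, h3, h4, h5, h6⟩ := hmu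
      simp only [List.headI] at hpar
      simp only [incr, List.headI, List.tail]
      refine ⟨mem_Sp_cons.2 ⟨fun x hx => by have := h1 x hx; omega, h2, by omega, h4, by omega, ?_⟩, ?_, ?_⟩
      · rw [evenStat_cons] at h6 ⊢
        simp only [if_pos hpar] at h6
        have : ¬ ((a + 1) % 2 = 0) := by omega
        simp only [if_neg this]
        omega
      · cases t with
        | nil => simp
        | cons c u =>
          right
          have := h1 c (by simp)
          simpa using by omega
      · simp; omega

lemma De_eq (m k : ℕ) : De (m + 1) (k + 1) = dup '' He m k := by
  ext l
  constructor
  · rintro ⟨hl, hne, heq, hpar⟩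
    cases l with
    | nil => exact absurd rfl (mem_Sp_ne_nil hl)
    | cons b t =>
      cases t with
      | nil => simp at hne
      | cons c u =>
        rw [mem_Sp_cons] at hl
        obtain ⟨h1, h2, h3, h4, h5, h6⟩ := hl
        simp only [List.headI, List.tail] at heq hpar
        subst heq
        refine ⟨c :: u, ⟨?_, hpar⟩, by simp [dup]⟩
        rw [mem_Sp_cons] at *
        rw [List.pairwise_cons] at h2
        refine ⟨h2.1, h2.2, h4 c (by simp), fun x hx => h4 x (by simp [hx]), by simp at h5 ⊢; omega, ?_⟩
        rw [evenStat_cons (a := c)] at h6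
        rw [evenStat_cons] at h6 ⊢
        simp only [if_pos hpar] at h6 ⊢
        omega
  · rintro ⟨mu, ⟨hmu, hpar⟩, rfl⟩
    cases mu with
    | nil => exact absurd rfl (mem_Sp_ne_nil hmu)
    | cons a t =>
      rw [mem_Sp_cons] at hmu
      obtain ⟨h1, h2, h3, h4, h5, h6⟩ := hmu
      simp only [List.headI] at hpar
      simp only [dup, List.headI, List.tail]
      refine ⟨mem_Sp_cons.2 ⟨?_, List.pairwise_cons.2 ⟨h1, h2⟩, h3, ?_, by simp; omega, ?_⟩, by simp, rfl, hpar⟩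
      · intro x hx
        rcases List.mem_cons.1 hx with rfl | hx
        · exact le_refl _
        · exact h1 x hx
      · intro x hx
        rcases List.mem_cons.1 hx with rfl | hx
        · exact h3
        · exact h4 x hx
      · rw [evenStat_cons (a := a) (t := a :: t), evenStat_cons] at *
        simp only [if_pos hpar] at *
        omega

lemma Do_eq (m k : ℕ) : Do (m + 1) k = dup '' Ho m k := by
  ext l
  constructor
  · rintro ⟨hl, hne, heq, hpar⟩
    cases l with
    | nil => exact absurd rfl (mem_Sp_ne_nil hl)
    | cons b t =>
      cases t with
      | nil => simp at hne
      | cons c u =>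
        rw [mem_Sp_cons] at hl
        obtain ⟨h1, h2, h3, h4, h5, h6⟩ := hl
        simp only [List.headI, List.tail] at heq hpar
        subst heq
        refine ⟨c :: u, ⟨?_, hpar⟩, by simp [dup]⟩
        rw [mem_Sp_cons] at *
        rw [List.pairwise_cons] at h2
        refine ⟨h2.1, h2.2, h4 c (by simp), fun x hx => h4 x (by simp [hx]), by simp at h5 ⊢; omega, ?_⟩
        rw [evenStat_cons (a := c)] at h6
        rw [evenStat_cons] at h6 ⊢
        have hno : ¬ (c % 2 = 0) := by omega
        simp only [if_neg hno] at h6 ⊢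
        omega
  · rintro ⟨mu, ⟨hmu, hpar⟩, rfl⟩
    cases mu with
    | nil => exact absurd rfl (mem_Sp_ne_nil hmu)
    | cons a t =>
      rw [mem_Sp_cons] at hmu
      obtain ⟨h1, h2, h3, h4, h5, h6⟩ := hmu
      simp only [List.headI] at hpar
      simp only [dup, List.headI, List.tail]
      refine ⟨mem_Sp_cons.2 ⟨?_, List.pairwise_cons.2 ⟨h1, h2⟩, h3, ?_, by simp; omega, ?_⟩, by simp, rfl, hpar⟩
      · intro x hx
        rcases List.mem_cons.1 hx with rfl | hx
        · exact le_refl _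
        · exact h1 x hx
      · intro x hx
        rcases List.mem_cons.1 hx with rfl | hx
        · exact h3
        · exact h4 x hx
      · rw [evenStat_cons (a := a) (t := a :: t), evenStat_cons] at *
        have hno : ¬ (a % 2 = 0) := by omega
        simp only [if_neg hno] at *
        omega

lemma trichotomy {n k : ℕ} {l : List ℕ} (hl : l ∈ Sp n k) :
    (l.tail = [] ∨ l.tail.headI < l.headI) ∨ (l.tail ≠ [] ∧ l.tail.headI = l.headI) := by
  cases l with
  | nil => exact absurd rfl (mem_Sp_ne_nil hl)
  | cons a t =>
    cases t with
    | nil => exact Or.inl (Or.inl rfl)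
    | cons c u =>
      rw [mem_Sp_cons] at hl
      have := hl.1 c (by simp)
      simp only [List.tail, List.headI]
      rcases lt_or_eq_of_le this with h | h
      · exact Or.inl (Or.inr h)
      · exact Or.inr ⟨by simp, h⟩

lemma parity2 (a : ℕ) : a % 2 = 0 ∨ a % 2 = 1 := by omega

lemma cover (n k : ℕ) : Sp n k = (Ae n k ∪ Ao n k) ∪ (De n k ∪ Do n k) := by
  ext l
  constructor
  · intro hl
    rcases trichotomy hl with h | h
    · rcases parity2 l.headI with hp | hp
      · exact Or.inl (Or.inl ⟨hl, h, hp⟩)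
      · exact Or.inl (Or.inr ⟨hl, h, hp⟩)
    · rcases parity2 l.headI with hp | hp
      · exact Or.inr (Or.inl ⟨hl, h.1, h.2, hp⟩)
      · exact Or.inr (Or.inr ⟨hl, h.1, h.2, hp⟩)
  · rintro ((⟨h, -⟩ | ⟨h, -⟩) | (⟨h, -⟩ | ⟨h, -⟩)) <;> exact h

lemma He_split (n k : ℕ) : He n k = Ae n k ∪ De n k := by
  ext l
  constructor
  · rintro ⟨hl, hp⟩
    rcases trichotomy hl with h | h
    · exact Or.inl ⟨hl, h, hp⟩
    · exact Or.inr ⟨hl, h.1, h.2, hp⟩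
  · rintro (⟨h, -, hp⟩ | ⟨h, -, -, hp⟩) <;> exact ⟨h, hp⟩

lemma Ho_split (n k : ℕ) : Ho n k = Ao n k ∪ Do n k := by
  ext l
  constructor
  · rintro ⟨hl, hp⟩
    rcases trichotomy hl with h | h
    · exact Or.inl ⟨hl, h, hp⟩
    · exact Or.inr ⟨hl, h.1, h.2, hp⟩
  · rintro (⟨h, -, hp⟩ | ⟨h, -, -, hp⟩) <;> exact ⟨h, hp⟩

lemma parity_split (n k : ℕ) : Sp n k = He n k ∪ Ho n k := by
  ext l
  constructor
  · intro hl
    rcases parity2 l.headI with hp | hp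
    · exact Or.inl ⟨hl, hp⟩
    · exact Or.inr ⟨hl, hp⟩
  · rintro (⟨h, -⟩ | ⟨h, -⟩) <;> exact h

lemma Ae_sub (n k : ℕ) : Ae n k ⊆ Sp n k := fun l h => h.1
lemma Ao_sub (n k : ℕ) : Ao n k ⊆ Sp n k := fun l h => h.1
lemma De_sub (n k : ℕ) : De n k ⊆ Sp n k := fun l h => h.1
lemma Do_sub (n k : ℕ) : Do n k ⊆ Sp n k := fun l h => h.1
lemma He_sub (n k : ℕ) : He n k ⊆ Sp n k := fun l h => h.1
lemma Ho_sub (n k : ℕ) : Ho n k ⊆ Sp n k := fun l h => h.1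

lemma disj_AeAo (n k : ℕ) : Disjoint (Ae n k) (Ao n k) := by
  rw [Set.disjoint_left]
  rintro l ⟨-, -, h0⟩ ⟨-, -, h1⟩
  omega

lemma disj_DeDo (n k : ℕ) : Disjoint (De n k) (Do n k) := by
  rw [Set.disjoint_left]
  rintro l ⟨-, -, -, h0⟩ ⟨-, -, -, h1⟩
  omega

lemma disj_AD (n k n' k' : ℕ) : Disjoint (Ae n k ∪ Ao n k) (De n' k' ∪ Do n' k') := by
  rw [Set.disjoint_left]
  rintro l (⟨-, hs, -⟩ | ⟨-, hs, -⟩) (⟨-, hn, he, -⟩ | ⟨-, hn, he, -⟩) <;>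
    · rcases hs with h | h
      · exact hn h
      · omega

lemma disj_AeDe (n k : ℕ) : Disjoint (Ae n k) (De n k) := by
  rw [Set.disjoint_left]
  rintro l ⟨-, hs, -⟩ ⟨-, hn, he, -⟩
  rcases hs with h | h
  · exact hn h
  · omega

lemma disj_AoDo (n k : ℕ) : Disjoint (Ao n k) (Do n k) := by
  rw [Set.disjoint_left]
  rintro l ⟨-, hs, -⟩ ⟨-, hn, he, -⟩
  rcases hs with h | h
  · exact hn h
  · omega

lemma disj_HeHo (n k : ℕ) : Disjoint (He n k) (Ho n k) := by
  rw [Set.disjoint_left]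
  rintro l ⟨-, h0⟩ ⟨-, h1⟩
  omega

lemma parity_card (n k : ℕ) : (He n k).ncard + (Ho n k).ncard = B n k := by
  rw [B_def, parity_split n k,
    Set.ncard_union_eq (disj_HeHo n k)
      ((Sp_finite n k).subset (He_sub n k)) ((Sp_finite n k).subset (Ho_sub n k))]

lemma card_Ae (m k : ℕ) : (Ae (m + 1) (k + 1)).ncard = (Ho m k).ncard := by
  rw [Ae_eq]
  exact Set.ncard_image_of_injOn (incr_injOn _ fun l hl => mem_Sp_ne_nil hl.1)

lemma card_Ao (m k : ℕ) (hm : 1 ≤ m) : (Ao (m + 1) k).ncard = (He m (k + 1)).ncard := by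
  rw [Ao_eq m k hm]
  exact Set.ncard_image_of_injOn (incr_injOn _ fun l hl => mem_Sp_ne_nil hl.1)

lemma card_De (m k : ℕ) : (De (m + 1) (k + 1)).ncard = (He m k).ncard := by
  rw [De_eq]
  exact Set.ncard_image_of_injOn (dup_inj.injOn)

lemma card_Do (m k : ℕ) : (Do (m + 1) k).ncard = (Ho m k).ncard := by
  rw [Do_eq]
  exact Set.ncard_image_of_injOn (dup_inj.injOn)

lemma He_card (m k : ℕ) : (He (m + 1) (k + 1)).ncard = B m k := by
  rw [He_split,
    Set.ncard_union_eq (disj_AeDe _ _)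
      ((Sp_finite _ _).subset (Ae_sub _ _)) ((Sp_finite _ _).subset (De_sub _ _)),
    card_Ae, card_De]
  rw [← parity_card m k]
  omega

lemma B_card (m k : ℕ) (hm : 1 ≤ m) :
    B (m + 1) (k + 1) =
      (Ho m k).ncard + (He m (k + 1 + 1)).ncard + (He m k).ncard + (Ho m (k + 1)).ncard := by
  rw [B_def, cover,
    Set.ncard_union_eq (disj_AD _ _ _ _)
      (((Sp_finite _ _).subset (Ae_sub _ _)).union ((Sp_finite _ _).subset (Ao_sub _ _)))
      (((Sp_finite _ _).subset (De_sub _ _)).union ((Sp_finite _ _).subset (Do_sub _ _))),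
    Set.ncard_union_eq (disj_AeAo _ _)
      ((Sp_finite _ _).subset (Ae_sub _ _)) ((Sp_finite _ _).subset (Ao_sub _ _)),
    Set.ncard_union_eq (disj_DeDo _ _)
      ((Sp_finite _ _).subset (De_sub _ _)) ((Sp_finite _ _).subset (Do_sub _ _)),
    card_Ae, card_Ao m (k + 1) hm, card_De, card_Do]
  omega

end BRec

theorem B_recurrence (n k : ℕ) (hn : 3 ≤ n) (hk : 1 ≤ k) :
    (B n k : ℤ) =
      B (n - 1) k + B (n - 1) (k - 1) + B (n - 2) k - B (n - 2) (k - 1) := by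
  obtain ⟨m, rfl⟩ : ∃ m, n = m + 3 := ⟨n - 3, by omega⟩
  obtain ⟨j, rfl⟩ : ∃ j, k = j + 1 := ⟨k - 1, by omega⟩
  have e1 : m + 3 - 1 = m + 2 := by omega
  have e2 : m + 3 - 2 = m + 1 := by omega
  have e3 : j + 1 - 1 = j := by omega
  rw [e1, e2, e3]
  have h1 := BRec.B_card (m + 2) j (by omega)
  have h2 := BRec.parity_card (m + 2) j
  have h3 := BRec.He_card (m + 1) (j + 1)
  have h4 := BRec.He_card (m + 1) j
  have h5 := BRec.parity_card (m + 2) (j + 1)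
  have e4 : m + 2 + 1 = m + 3 := by omega
  have e5 : m + 1 + 1 = m + 2 := by omega
  rw [e4] at h1
  rw [e5] at h3 h4
  omega
end

section
/- There is a bijection between partitions with perimeter n and 01-sequences w₀w₁...w_n with w₀ = 0 and w_n = 1, under which the number of parts of λ equals the number of indices 1 ≤ i ≤ n with w_i = 1, the number of repeated parts rep(λ) equals |{1 ≤ i ≤ n : w_i = w_{i−1} = 1}|, and the number of even parts even(λ) equals the number of indices 1 ≤ i ≤ n with w_i = 1 such that the number of j with 0 ≤ j < i and w_j = 0 is even. -/
namespace PB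

instance : IsAntisymm ℕ (· > ·) := ⟨fun a b h h' => absurd h (not_lt.2 h'.le)⟩

def pos (l : List ℕ) : List ℕ := l.mapIdx fun j a => a + (l.length - 1 - j)

def unpos (s : List ℕ) : List ℕ := s.mapIdx fun j a => a - (s.length - 1 - j)

@[simp] lemma length_pos (l : List ℕ) : (pos l).length = l.length := List.length_mapIdx

@[simp] lemma length_unpos (s : List ℕ) : (unpos s).length = s.length := List.length_mapIdx

lemma getElem_pos (l : List ℕ) {j : ℕ} (h : j < (pos l).length) :
    (pos l)[j] = l[j]'(by simpa using h) + (l.length - 1 - j) := List.getElem_mapIdx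

lemma getElem_unpos (s : List ℕ) {j : ℕ} (h : j < (unpos s).length) :
    (unpos s)[j] = s[j]'(by simpa using h) - (s.length - 1 - j) := List.getElem_mapIdx

/-- strictly decreasing lists: gap estimate -/
lemma sdec_ge {s : List ℕ} (hs : s.Pairwise (· > ·)) {i j : ℕ} (hij : i ≤ j)
    (hj : j < s.length) : s[j]'hj + (j - i) ≤ s[i]'(lt_of_le_of_lt hij hj) := by
  rcases eq_or_lt_of_le hij with rfl | hlt
  · simp
  · have := (List.pairwise_iff_getElem.1 hs) i j (lt_of_le_of_lt hij hj) hj hlt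
    -- need stronger: induction on j
    clear this
    induction j with
    | zero => omega
    | succ k ih =>
      have hk : k < s.length := by omega
      have h1 : s[k + 1] < s[k] :=
        (List.pairwise_iff_getElem.1 hs) k (k+1) hk hj (by omega)
      rcases Nat.lt_succ_iff_lt_or_eq.1 hlt with h | rfl
      · have := ih (le_of_lt h) hk h
        omega
      · simp; omega

lemma pos_sorted {l : List ℕ} (hl : l.Pairwise (· ≥ ·)) : (pos l).Pairwise (· > ·) := by
  rw [List.pairwise_iff_getElem]
  intro i j hi hj hij
  rw [getElem_pos, getElem_pos]
  have hle : l[j]'(by simpa using hj) ≤ l[i]'(by simpa using hi) :=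
    (List.pairwise_iff_getElem.1 hl) i j (by simpa using hi) (by simpa using hj) hij
  have : j < l.length := by simpa using hj
  omega

lemma pos_nodup {l : List ℕ} (hl : l.Pairwise (· ≥ ·)) : (pos l).Nodup :=
  (pos_sorted hl).imp fun h => Nat.ne_of_gt h

lemma unpos_pos (l : List ℕ) : unpos (pos l) = l := by
  apply List.ext_getElem (by simp)
  intro j h1 h2
  rw [getElem_unpos, getElem_pos]
  simp

lemma pos_unpos {s : List ℕ} (hs : s.Pairwise (· > ·)) : pos (unpos s) = s := by
  apply List.ext_getElem (by simp)
  intro j h1 h2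
  rw [getElem_pos, getElem_unpos]
  have hL : s.length - 1 < s.length := by omega
  have := sdec_ge hs (i := j) (j := s.length - 1) (by omega) hL
  simp only [length_unpos]
  omega

end PB

namespace PB

lemma headI_eq_getElem {l : List ℕ} (h : 0 < l.length) : l.headI = l[0] := by
  cases l with
  | nil => simp at h
  | cons a t => simp

section Part
variable {n : ℕ} {l : List ℕ} (hl : IsPartition l) (hp : perim l = n)

include hl hp

lemma pos_mem_bounds {x : ℕ} (hx : x ∈ PB.pos l) : 1 ≤ x ∧ x ≤ n := by
  obtain ⟨hne, hsort, hpos⟩ := hl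
  have hL : 0 < l.length := List.length_pos_iff.2 hne
  obtain ⟨j, hj, rfl⟩ := List.mem_iff_getElem.1 hx
  rw [getElem_pos]
  have hj' : j < l.length := by simpa using hj
  have h1 : 0 < l[j] := hpos _ (List.getElem_mem hj')
  have h2 : l[j] ≤ l[0] := by
    rcases Nat.eq_zero_or_pos j with rfl | hj0
    · exact le_rfl
    · exact (List.pairwise_iff_getElem.1 hsort) 0 j hL hj' hj0
  have hh : l.headI = l[0] := headI_eq_getElem hL
  unfold perim at hp
  omega

lemma pos_mem_n : n ∈ PB.pos l := by
  obtain ⟨hne, hsort, hpos⟩ := hl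
  have hL : 0 < l.length := List.length_pos_iff.2 hne
  have h0 : (PB.pos l)[0]'(by simpa using hL) = n := by
    rw [getElem_pos]
    have hh : l.headI = l[0] := headI_eq_getElem hL
    unfold perim at hp
    have h1 : 0 < l[0] := hpos _ (List.getElem_mem hL)
    omega
  exact h0 ▸ List.getElem_mem _

end Part

section Word
variable (n : ℕ)

def wordOf (s : List ℕ) : List Bool := (List.range (n+1)).map fun i => decide (i ∈ s)

def listOf (w : List Bool) : List ℕ :=
  ((List.range (n+1)).filter fun i => w.getD i false).reverse

@[simp] lemma length_wordOf (s : List ℕ) : (wordOf n s).length = n + 1 := by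
  simp [wordOf]

lemma getD_wordOf (s : List ℕ) {i : ℕ} (hi : i ≤ n) (d : Bool) :
    (wordOf n s).getD i d = decide (i ∈ s) := by
  rw [List.getD_eq_getElem _ _ (by simp; omega)]
  simp [wordOf]

lemma listOf_sorted (w : List Bool) : (listOf n w).Pairwise (· > ·) := by
  rw [listOf, List.pairwise_reverse]
  exact List.Pairwise.filter _ List.pairwise_lt_range

lemma mem_listOf {w : List Bool} {i : ℕ} :
    i ∈ listOf n w ↔ i < n + 1 ∧ w.getD i false = true := by
  simp [listOf, List.mem_filter]

end Word

end PB

namespace PB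

section Back
variable {n : ℕ} {s : List ℕ} (hs : s.Pairwise (· > ·)) (hne : s ≠ [])
  (h0 : 0 ∉ s) (hub : ∀ x ∈ s, x ≤ n) (hn : n ∈ s)

include hs hne h0 hub hn

lemma unpos_head : s[0]'(List.length_pos_iff.2 hne) = n := by
  obtain ⟨j, hj, rfl⟩ := List.mem_iff_getElem.1 hn
  have := sdec_ge hs (i := 0) (j := j) (by omega) hj
  have h2 := hub _ (List.getElem_mem (l := s) (List.length_pos_iff.2 hne))
  omega

lemma unpos_isPartition : IsPartition (unpos s) ∧ perim (unpos s) = n := by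
  have hL : 0 < s.length := List.length_pos_iff.2 hne
  have hlast : 0 < s[s.length - 1]'(by omega) := by
    rcases Nat.eq_zero_or_pos (s[s.length - 1]'(by omega)) with h | h
    · exact absurd (h ▸ List.getElem_mem _) h0
    · exact h
  have key : ∀ j (hj : j < s.length), s.length - 1 - j ≤ s[j] - 1 := by
    intro j hj
    have := sdec_ge hs (i := j) (j := s.length - 1) (by omega) (by omega)
    omega
  refine ⟨⟨?_, ?_, ?_⟩, ?_⟩
  · intro h
    apply hne
    rw [← List.length_eq_zero_iff]
    have := congrArg List.length h
    simpa using this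
  · rw [List.pairwise_iff_getElem]
    intro i j hi hj hij
    have hi' : i < s.length := by simpa using hi
    have hj' : j < s.length := by simpa using hj
    show (unpos s)[i]'hi ≥ (unpos s)[j]'hj
    rw [getElem_unpos, getElem_unpos]
    have h1 : s[j]'hj' + (j - i) ≤ s[i]'hi' := sdec_ge hs (le_of_lt hij) hj'
    have h2 : s.length - 1 - j ≤ s[j]'hj' - 1 := key j hj'
    omega
  · intro x hx
    obtain ⟨j, hj, rfl⟩ := List.mem_iff_getElem.1 hx
    have hj' : j < s.length := by simpa using hj
    rw [getElem_unpos]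
    have h4 := sdec_ge hs (i := j) (j := s.length - 1) (by omega) (by omega)
    omega
  · have hh : (unpos s).headI = (unpos s)[0]'(by simpa using hL) :=
      headI_eq_getElem (by simpa using hL)
    unfold perim
    rw [hh, getElem_unpos]
    have h1 := unpos_head hs hne h0 hub hn
    have h2 := key 0 hL
    simp only [length_unpos]
    omega

end Back

end PB

namespace PB

variable (n : ℕ)

abbrev P := {l : List ℕ // IsPartition l ∧ perim l = n}
abbrev W := {w : List Bool // w.length = n + 1 ∧ w.getD 0 true = false ∧ w.getD n false = true}

def F (l : P n) : W n := by
  refine ⟨wordOf n (pos l.1), by simp, ?_, ?_⟩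
  · rw [getD_wordOf _ _ (Nat.zero_le _)]
    simp only [decide_eq_false_iff_not]
    intro h0
    have := (pos_mem_bounds l.2.1 l.2.2 h0).1
    omega
  · rw [getD_wordOf _ _ le_rfl]
    simp only [decide_eq_true_eq]
    exact pos_mem_n l.2.1 l.2.2

lemma listOf_props (w : W n) :
    (listOf n w.1).Pairwise (· > ·) ∧ listOf n w.1 ≠ [] ∧ 0 ∉ listOf n w.1 ∧
      (∀ x ∈ listOf n w.1, x ≤ n) ∧ n ∈ listOf n w.1 := by
  obtain ⟨w, h1, h2, h3⟩ := w
  have hmemn : n ∈ listOf n w := (mem_listOf n).2 ⟨by omega, h3⟩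
  refine ⟨listOf_sorted n w, ?_, ?_, ?_, hmemn⟩
  · exact List.ne_nil_of_mem hmemn
  · intro h0
    have hmm := ((mem_listOf n).1 h0).2
    have e0 : (0:ℕ) < w.length := by omega
    rw [List.getD_eq_getElem w true e0] at h2
    rw [List.getD_eq_getElem w false e0] at hmm
    rw [hmm] at h2
    simp at h2
  · intro x hx
    have := ((mem_listOf n).1 hx).1
    omega

def G (w : W n) : P n :=
  ⟨unpos (listOf n w.1), by
    obtain ⟨hs, hne, h0, hub, hn⟩ := listOf_props n w
    exact unpos_isPartition hs hne h0 hub hn⟩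

lemma left_inv : Function.LeftInverse (G n) (F n) := by
  intro l
  apply Subtype.ext
  show unpos (listOf n (wordOf n (pos l.1))) = l.1
  have hkey : listOf n (wordOf n (pos l.1)) = pos l.1 := by
    apply List.Perm.eq_of_pairwise (le := (· > ·)) (fun a b _ _ h1 h2 => absurd h1 (not_lt.2 h2.le)) (listOf_sorted n _) (pos_sorted l.2.1.2.1)
    rw [List.perm_ext_iff_of_nodup ((listOf_sorted n _).imp fun h => Nat.ne_of_gt h)
      (pos_nodup l.2.1.2.1)]
    intro a
    rw [mem_listOf]
    constructor
    · rintro ⟨ha, hd⟩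
      rw [getD_wordOf _ _ (by omega)] at hd
      exact of_decide_eq_true hd
    · intro ha
      have hb := pos_mem_bounds l.2.1 l.2.2 ha
      exact ⟨by omega, by rw [getD_wordOf _ _ (by omega)]; exact decide_eq_true ha⟩
  rw [hkey, unpos_pos]

lemma right_inv : Function.RightInverse (G n) (F n) := by
  intro w
  apply Subtype.ext
  show wordOf n (pos (unpos (listOf n w.1))) = w.1
  rw [pos_unpos (listOf_sorted n w.1)]
  apply List.ext_getElem (by simp [w.2.1])
  intro i h1 h2
  have hi : i ≤ n := by simp only [length_wordOf] at h1; omega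
  have : (wordOf n (listOf n w.1)).getD i false = (wordOf n (listOf n w.1))[i] :=
    (List.getD_eq_getElem _ _ h1)
  rw [← this, getD_wordOf _ _ hi]
  have hw : w.1.getD i false = w.1[i] := List.getD_eq_getElem _ _ h2
  cases hb : (w.1)[i] with
  | false =>
    simp only [decide_eq_false_iff_not, mem_listOf]
    rintro ⟨-, hx⟩
    rw [hw, hb] at hx
    simp at hx
  | true =>
    simp only [decide_eq_true_eq, mem_listOf]
    exact ⟨by omega, by rw [hw, hb]⟩

def equivPW : P n ≃ W n := ⟨F n, G n, left_inv n, right_inv n⟩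

end PB

namespace PB

def pj (l : List ℕ) (j : ℕ) : ℕ := l.getD j 0 + (l.length - 1 - j)

lemma getD_pos' {l : List ℕ} {j : ℕ} (hj : j < l.length) : (pos l).getD j 0 = pj l j := by
  rw [List.getD_eq_getElem _ _ (by simpa using hj), getElem_pos, pj,
    List.getD_eq_getElem _ _ hj]

lemma pj_mem {l : List ℕ} {j : ℕ} (hj : j < l.length) : pj l j ∈ pos l := by
  have h : (pos l)[j]'(by simpa using hj) = pj l j := by
    rw [getElem_pos, pj, List.getD_eq_getElem _ _ hj]
  exact h ▸ List.getElem_mem _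

lemma pj_anti {l : List ℕ} (hsort : l.Pairwise (· ≥ ·)) {j k : ℕ} (hjk : j < k)
    (hk : k < l.length) : pj l k < pj l j := by
  have hj : j < l.length := lt_trans hjk hk
  have : l.getD k 0 ≤ l.getD j 0 := by
    rw [List.getD_eq_getElem _ _ hj, List.getD_eq_getElem _ _ hk]
    exact (List.pairwise_iff_getElem.1 hsort) j k hj hk hjk
  unfold pj
  omega

lemma pj_inj {l : List ℕ} (hsort : l.Pairwise (· ≥ ·)) {j k : ℕ} (hj : j < l.length)
    (hk : k < l.length) (h : pj l j = pj l k) : j = k := by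
  rcases lt_trichotomy j k with hc | hc | hc
  · exact absurd h (Nat.ne_of_gt (pj_anti hsort hc hk))
  · exact hc
  · exact absurd h (Nat.ne_of_lt (pj_anti hsort hc hj))

lemma pj_surj {l : List ℕ} {i : ℕ} (hi : i ∈ pos l) : ∃ j, j < l.length ∧ pj l j = i := by
  obtain ⟨j, hj, rfl⟩ := List.mem_iff_getElem.1 hi
  refine ⟨j, by simpa using hj, ?_⟩
  rw [getElem_pos, pj, List.getD_eq_getElem _ _ (by simpa using hj)]

/-- counting lemma: number of elements of `pos l` below `pj l j` -/
lemma count_below {l : List ℕ} (hsort : l.Pairwise (· ≥ ·)) {j : ℕ} (hj : j < l.length) :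
    ((Finset.range (pj l j)).filter (fun x => x ∈ pos l)).card = l.length - 1 - j := by
  have hcard : (Finset.Ico (j+1) l.length).card = l.length - 1 - j := by
    rw [Nat.card_Ico]; omega
  rw [← hcard]
  apply (Finset.card_bij (fun k _ => pj l k) ?_ ?_ ?_).symm
  · intro k hk
    rw [Finset.mem_Ico] at hk
    rw [Finset.mem_filter, Finset.mem_range]
    exact ⟨pj_anti hsort (by omega) hk.2, pj_mem hk.2⟩
  · intro k1 h1 k2 h2 h
    rw [Finset.mem_Ico] at h1 h2
    exact pj_inj hsort (by omega) (by omega) h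
  · intro x hx
    rw [Finset.mem_filter, Finset.mem_range] at hx
    obtain ⟨k, hk, rfl⟩ := pj_surj hx.2
    refine ⟨k, ?_, rfl⟩
    rw [Finset.mem_Ico]
    refine ⟨?_, hk⟩
    by_contra hcon
    push_neg at hcon
    have hkj : k ≤ j := by omega
    rcases eq_or_lt_of_le hkj with rfl | h
    · exact absurd hx.1 (lt_irrefl _)
    · exact absurd hx.1 (not_lt.2 (le_of_lt (pj_anti hsort h hj)))

end PB

namespace PB

lemma countP_eq_card {α : Type*} (p : α → Bool) (d : α) (l : List α) :
    l.countP p = ((Finset.range l.length).filter (fun j => p (l.getD j d) = true)).card := by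
  induction l using List.reverseRecOn with
  | nil => simp
  | append_singleton t a ih =>
    rw [List.countP_append]
    have hlen : (t ++ [a]).length = t.length + 1 := by simp
    rw [hlen, Finset.range_add_one, Finset.filter_insert]
    have hgd : (t ++ [a]).getD t.length d = a := by
      rw [List.getD_append_right t [a] d t.length le_rfl]
      simp
    have hfe : (Finset.range t.length).filter (fun j => p ((t ++ [a]).getD j d) = true) =
        (Finset.range t.length).filter (fun j => p (t.getD j d) = true) := by
      apply Finset.filter_congr
      intro x hx
      rw [Finset.mem_range] at hx
      rw [List.getD_append t [a] d x hx]
    rw [hgd, hfe]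
    cases hpa : p a with
    | false =>
      rw [List.countP_singleton, hpa]
      simp only [Bool.false_eq_true, if_false, Nat.add_zero]
      exact ih
    | true =>
      rw [List.countP_singleton, hpa]
      simp only [if_true]
      rw [Finset.card_insert_of_notMem (by simp), ← ih]

lemma repStat_eq_card (l : List ℕ) :
    repStat l = ((Finset.range (l.length - 1)).filter
      (fun i => l.getD i 0 = l.getD (i + 1) 0)).card := rfl

end PB

namespace PB

section Stats

variable {n : ℕ} {l : List ℕ} (hl : IsPartition l) (hp : perim l = n)

include hl hp

lemma stat1 :
    l.length = ((Finset.Icc 1 n).filter fun i =>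
      (wordOf n (pos l)).getD i false = true).card := by
  have hfc : (Finset.Icc 1 n).filter (fun i => (wordOf n (pos l)).getD i false = true)
      = (Finset.Icc 1 n).filter (fun i => i ∈ pos l) := by
    apply Finset.filter_congr
    intro x hx
    rw [Finset.mem_Icc] at hx
    rw [getD_wordOf _ _ hx.2]
    simp
  have htf : (Finset.Icc 1 n).filter (fun i => i ∈ pos l) = (pos l).toFinset := by
    ext x
    simp only [Finset.mem_filter, Finset.mem_Icc, List.mem_toFinset]
    exact ⟨fun h => h.2, fun h => ⟨pos_mem_bounds hl hp h, h⟩⟩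
  rw [hfc, htf, List.toFinset_card_of_nodup (pos_nodup hl.2.1), length_pos]

lemma stat2 :
    repStat l = ((Finset.Icc 1 n).filter fun i =>
      (wordOf n (pos l)).getD i false = true ∧
        (wordOf n (pos l)).getD (i - 1) false = true).card := by
  have hsort := hl.2.1
  have hL : 0 < l.length := List.length_pos_iff.2 hl.1
  have hfc : (Finset.Icc 1 n).filter (fun i => (wordOf n (pos l)).getD i false = true ∧
        (wordOf n (pos l)).getD (i - 1) false = true)
      = (Finset.Icc 1 n).filter (fun i => i ∈ pos l ∧ i - 1 ∈ pos l) := by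
    apply Finset.filter_congr
    intro x hx
    rw [Finset.mem_Icc] at hx
    rw [getD_wordOf _ _ hx.2, getD_wordOf _ _ (by omega)]
    simp
  rw [hfc, repStat_eq_card]
  apply Finset.card_bij (fun j _ => pj l j)
  · intro j hj
    rw [Finset.mem_filter, Finset.mem_range] at hj
    obtain ⟨hjL, heq⟩ := hj
    have hj1 : j + 1 < l.length := by omega
    have hmem : pj l j ∈ pos l := pj_mem (by omega)
    have hb := pos_mem_bounds hl hp hmem
    have hstep : pj l j - 1 = pj l (j + 1) := by
      unfold pj
      omega
    rw [Finset.mem_filter, Finset.mem_Icc]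
    exact ⟨hb, hmem, hstep ▸ pj_mem hj1⟩
  · intro j1 h1 j2 h2 h
    rw [Finset.mem_filter, Finset.mem_range] at h1 h2
    exact pj_inj hsort (by omega) (by omega) h
  · intro i hi
    rw [Finset.mem_filter, Finset.mem_Icc] at hi
    obtain ⟨⟨hi1, hi2⟩, hmem, hmem'⟩ := hi
    obtain ⟨j, hj, rfl⟩ := pj_surj hmem
    obtain ⟨k, hk, hke⟩ := pj_surj hmem'
    have hjk : j < k := by
      by_contra hcon
      push_neg at hcon
      rcases eq_or_lt_of_le hcon with rfl | h
      · omega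
      · have := pj_anti hsort h hj
        omega
    have hkj1 : k = j + 1 := by
      by_contra hcon
      have hk2 : j + 1 < k := by omega
      have h1 := pj_anti hsort hk2 hk
      have h2 : pj l (j + 1) < pj l j := pj_anti hsort (k := j + 1) (by omega) (by omega)
      omega
    subst hkj1
    have heq : l.getD j 0 = l.getD (j + 1) 0 := by
      unfold pj at hke
      have : l.length - 1 - j ≥ 1 := by omega
      omega
    exact ⟨j, by rw [Finset.mem_filter, Finset.mem_range]; exact ⟨by omega, heq⟩, rfl⟩

lemma stat3 :
    evenStat l = ((Finset.Icc 1 n).filter fun i =>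
      (wordOf n (pos l)).getD i false = true ∧
        ((Finset.range i).filter fun j =>
          (wordOf n (pos l)).getD j true = false).card % 2 = 0).card := by
  have hsort := hl.2.1
  have hL : 0 < l.length := List.length_pos_iff.2 hl.1
  have key : ∀ i, i ≤ n →
      ((Finset.range i).filter fun j => (wordOf n (pos l)).getD j true = false).card
        = i - ((Finset.range i).filter (fun j => j ∈ pos l)).card := by
    intro i hi
    have h1 : (Finset.range i).filter (fun j => (wordOf n (pos l)).getD j true = false)
        = (Finset.range i).filter (fun j => ¬ (j ∈ pos l)) := by
      apply Finset.filter_congr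
      intro x hx
      rw [Finset.mem_range] at hx
      rw [getD_wordOf _ _ (by omega)]
      simp
    rw [h1]
    have h2 := Finset.card_filter_add_card_filter_not (s := Finset.range i)
      (p := fun j => j ∈ pos l)
    rw [Finset.card_range] at h2
    omega
  have hfc : (Finset.Icc 1 n).filter (fun i => (wordOf n (pos l)).getD i false = true ∧
        ((Finset.range i).filter fun j =>
          (wordOf n (pos l)).getD j true = false).card % 2 = 0)
      = (Finset.Icc 1 n).filter (fun i => i ∈ pos l ∧
          (i - ((Finset.range i).filter (fun j => j ∈ pos l)).card) % 2 = 0) := by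
    apply Finset.filter_congr
    intro x hx
    rw [Finset.mem_Icc] at hx
    rw [getD_wordOf _ _ hx.2, key x hx.2]
    simp
  rw [hfc]
  have hev : evenStat l = ((Finset.range l.length).filter
      (fun j => l.getD j 0 % 2 = 0)).card := by
    rw [evenStat, countP_eq_card _ 0]
    congr 1
    apply Finset.filter_congr
    intro x _
    simp
  rw [hev]
  apply Finset.card_bij (fun j _ => pj l j)
  · intro j hj
    rw [Finset.mem_filter, Finset.mem_range] at hj
    obtain ⟨hjL, heven⟩ := hj
    have hmem : pj l j ∈ pos l := pj_mem hjL
    have hb := pos_mem_bounds hl hp hmem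
    rw [Finset.mem_filter, Finset.mem_Icc]
    refine ⟨hb, hmem, ?_⟩
    rw [count_below hsort hjL]
    have : pj l j - (l.length - 1 - j) = l.getD j 0 := by unfold pj; omega
    rw [this]
    exact heven
  · intro j1 h1 j2 h2 h
    rw [Finset.mem_filter, Finset.mem_range] at h1 h2
    exact pj_inj hsort h1.1 h2.1 h
  · intro i hi
    rw [Finset.mem_filter, Finset.mem_Icc] at hi
    obtain ⟨⟨hi1, hi2⟩, hmem, heven⟩ := hi
    obtain ⟨j, hj, rfl⟩ := pj_surj hmem
    refine ⟨j, ?_, rfl⟩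
    rw [Finset.mem_filter, Finset.mem_range]
    refine ⟨hj, ?_⟩
    rw [count_below hsort hj] at heven
    have : pj l j - (l.length - 1 - j) = l.getD j 0 := by unfold pj; omega
    rw [this] at heven
    exact heven

end Stats

end PB

theorem partition_01_sequence_bijection (n : ℕ) (hn : 1 ≤ n) :
    ∃ f : {l : List ℕ // IsPartition l ∧ perim l = n} ≃
          {w : List Bool // w.length = n + 1 ∧ w.getD 0 true = false ∧ w.getD n false = true},
      ∀ l : {l : List ℕ // IsPartition l ∧ perim l = n},
        l.1.length =
          ((Finset.Icc 1 n).filter fun i => (f l).1.getD i false = true).card ∧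
        repStat l.1 =
          ((Finset.Icc 1 n).filter fun i =>
            (f l).1.getD i false = true ∧ (f l).1.getD (i - 1) false = true).card ∧
        evenStat l.1 =
          ((Finset.Icc 1 n).filter fun i =>
            (f l).1.getD i false = true ∧
              ((Finset.range i).filter fun j => (f l).1.getD j true = false).card % 2 = 0).card := by
  refine ⟨PB.equivPW n, fun l => ?_⟩
  have hfl : ((PB.equivPW n) l).1 = PB.wordOf n (PB.pos l.1) := rfl
  simp only [hfl]
  exact ⟨PB.stat1 l.2.1 l.2.2, PB.stat2 l.2.1 l.2.2, PB.stat3 l.2.1 l.2.2⟩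
end

section
/- The generating function of partitions by perimeter, weighted by p^{rep(λ)} q^{even(λ)}, equals x(1 − (p−1)q(x² + x)) / (1 − p(1+q)x − (1 − p²q)x² − (1−p)(1+q)x³ − (p−1)²qx⁴); that is, Σ_λ p^{rep(λ)} q^{even(λ)} x^{Γ(λ)} equals that rational function, where the sum is over all nonempty integer partitions. -/
namespace GFaux

noncomputable section

abbrev Rg : Type := MvPolynomial (Fin 2) ℤ

def pp : Rg := MvPolynomial.X 0
def qq : Rg := MvPolynomial.X 1

def Af (l : List ℕ) : List ℕ := (l.headI + 1) :: l.tail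
def Bf (l : List ℕ) : List ℕ := l.headI :: l

def P : ℕ → Finset (List ℕ)
  | 0 => ∅
  | 1 => {[1]}
  | (n+2) => ((P (n+1)).image Af) ∪ ((P (n+1)).image Bf)

lemma perim_cons (h : ℕ) (t : List ℕ) : perim (h :: t) = h + t.length := by
  simp [perim]

lemma P_mem : ∀ n, ∀ l, l ∈ P n ↔ IsPartition l ∧ perim l = n := by
  intro n
  induction n using Nat.strong_induction_on with
  | _ n ih =>
    match n with
    | 0 =>
      intro l
      simp only [P, Finset.notMem_empty, false_iff]
      rintro ⟨⟨hne, _, hpos⟩, hp⟩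
      rcases l with _ | ⟨h, t⟩
      · exact hne rfl
      · rw [perim_cons] at hp
        have := hpos h (by simp)
        omega
    | 1 =>
      intro l
      simp only [P, Finset.mem_singleton]
      constructor
      · rintro rfl
        refine ⟨⟨by simp, by simp, by simp⟩, by simp [perim]⟩
      · rintro ⟨⟨hne, hs, hpos⟩, hp⟩
        rcases l with _ | ⟨h, t⟩
        · exact absurd rfl hne
        · rw [perim_cons] at hp
          have := hpos h (by simp)
          have ht : t.length = 0 := by omega
          have : t = [] := List.length_eq_zero_iff.mp ht
          subst this
          have : h = 1 := by omega
          subst this; rfl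
    | (m+2) =>
      have IH := ih (m+1) (by omega)
      intro l
      simp only [P, Finset.mem_union, Finset.mem_image]
      constructor
      · rintro (⟨a, ha, rfl⟩ | ⟨a, ha, rfl⟩)
        · obtain ⟨⟨hne, hs, hpos⟩, hp⟩ := (IH a).mp ha
          rcases a with _ | ⟨h, t⟩
          · exact absurd rfl hne
          · rw [perim_cons] at hp
            rw [List.pairwise_cons] at hs
            refine ⟨⟨by simp [Af], ?_, ?_⟩, ?_⟩
            · rw [Af]
              simp only [List.headI_cons, List.tail_cons]
              rw [List.pairwise_cons]
              exact ⟨fun y hy => le_trans (hs.1 y hy) (by omega), hs.2⟩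
            · rw [Af]
              simp only [List.headI_cons, List.tail_cons]
              intro x hx
              rcases List.mem_cons.mp hx with rfl | hx
              · omega
              · exact hpos x (List.mem_cons_of_mem _ hx)
            · rw [Af]
              simp only [List.headI_cons, List.tail_cons, perim_cons]
              omega
        · obtain ⟨⟨hne, hs, hpos⟩, hp⟩ := (IH a).mp ha
          rcases a with _ | ⟨h, t⟩
          · exact absurd rfl hne
          · rw [perim_cons] at hp
            rw [List.pairwise_cons] at hs
            refine ⟨⟨by simp [Bf], ?_, ?_⟩, ?_⟩
            · rw [Bf]
              simp only [List.headI_cons]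
              rw [List.pairwise_cons]
              refine ⟨fun y hy => ?_, List.pairwise_cons.mpr hs⟩
              rcases List.mem_cons.mp hy with rfl | hy
              · exact le_refl _
              · exact hs.1 y hy
            · rw [Bf]
              simp only [List.headI_cons]
              intro x hx
              rcases List.mem_cons.mp hx with heq | hx
              · rw [heq]; exact hpos h (by simp)
              · exact hpos x hx
            · rw [Bf]
              simp only [List.headI_cons, perim_cons, List.length_cons]
              omega
      · rintro ⟨⟨hne, hs, hpos⟩, hp⟩
        rcases l with _ | ⟨h, t⟩
        · exact absurd rfl hne
        rw [perim_cons] at hp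
        rw [List.pairwise_cons] at hs
        have hh : 0 < h := hpos h (by simp)
        rcases t with _ | ⟨h₂, t₂⟩
        · -- l = [h], h = m+2
          left
          refine ⟨[h-1], (IH _).mpr ⟨⟨by simp, by simp, ?_⟩, ?_⟩, ?_⟩
          · intro x hx
            simp only [List.mem_singleton] at hx
            subst hx
            simp at hp; omega
          · simp only [perim_cons, List.length_nil]
            simp at hp; omega
          · rw [Af]
            simp only [List.headI_cons, List.tail_cons]
            simp at hp
            congr 1
            omega
        · by_cases he : h = h₂
          · -- Bf case
            right
            subst he
            refine ⟨h :: t₂, (IH _).mpr ⟨⟨by simp, hs.2, ?_⟩, ?_⟩, rfl⟩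
            · intro x hx
              exact hpos x (List.mem_cons_of_mem _ hx)
            · simp only [perim_cons]
              simp only [List.length_cons] at hp
              omega
          · -- Af case
            left
            have hgt : h₂ < h := lt_of_le_of_ne (hs.1 h₂ (by simp)) (Ne.symm he)
            have hh2 : 0 < h₂ := hpos h₂ (by simp)
            have hs2 := List.pairwise_cons.mp hs.2
            refine ⟨(h-1) :: h₂ :: t₂, (IH _).mpr ⟨⟨by simp, ?_, ?_⟩, ?_⟩, ?_⟩
            · rw [List.pairwise_cons]
              refine ⟨fun y hy => ?_, hs.2⟩
              rcases List.mem_cons.mp hy with rfl | hy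
              · omega
              · have := hs2.1 y hy
                omega
            · intro x hx
              rcases List.mem_cons.mp hx with rfl | hx
              · omega
              · exact hpos x (List.mem_cons_of_mem _ hx)
            · simp only [perim_cons, List.length_cons]
              simp only [List.length_cons] at hp
              omega
            · rw [Af]
              simp only [List.headI_cons, List.tail_cons]
              congr 1
              omega


lemma repStat_nil : repStat [] = 0 := rfl

lemma repStat_single (x : ℕ) : repStat [x] = 0 := rfl

lemma repStat_cons_cons (x y : ℕ) (t : List ℕ) :
    repStat (x :: y :: t) = (if x = y then 1 else 0) + repStat (y :: t) := by
  unfold repStat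
  rw [← List.countP_eq_length_filter, ← List.countP_eq_length_filter]
  simp only [List.length_cons, Nat.add_sub_cancel]
  rw [List.range_succ_eq_map]
  rw [List.countP_cons, List.countP_map]
  have h0 : ((x :: y :: t).getD 0 0 = (x :: y :: t).getD 1 0) = (x = y) := by
    simp [List.getD]
  have h1 : ∀ i ∈ List.range (t.length),
      (((fun i => decide ((x :: y :: t).getD i 0 = (x :: y :: t).getD (i+1) 0)) ∘ Nat.succ) i = true)
        ↔ ((fun i => decide ((y :: t).getD i 0 = (y :: t).getD (i+1) 0)) i = true) := by
    intro i _
    simp [Function.comp, List.getD_cons_succ]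
  rw [List.countP_congr h1]
  simp only [h0]
  by_cases hxy : x = y <;> simp [hxy, Nat.add_comm]

lemma evenStat_nil : evenStat [] = 0 := rfl

lemma evenStat_cons (x : ℕ) (t : List ℕ) :
    evenStat (x :: t) = (if x % 2 = 0 then 1 else 0) + evenStat t := by
  unfold evenStat
  rw [List.countP_cons]
  by_cases h : x % 2 = 0 <;> simp [h, Nat.add_comm]

/-- head is even -/
def evS (l : List ℕ) : Prop := l.headI % 2 = 0

/-- head is repeated -/
def eqS (l : List ℕ) : Prop := l.tail ≠ [] ∧ l.headI = l.tail.headI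

instance : DecidablePred evS := fun l => inferInstanceAs (Decidable (_ = _))
instance : DecidablePred eqS := fun l => inferInstanceAs (Decidable (_ ∧ _))

lemma eqS_cons_cons (x y : ℕ) (t : List ℕ) : eqS (x :: y :: t) ↔ x = y := by
  simp [eqS]

lemma not_eqS_single (x : ℕ) : ¬ eqS [x] := by simp [eqS]

-- statistics of Bf
lemma repStat_Bf {l : List ℕ} (h : l ≠ []) : repStat (Bf l) = repStat l + 1 := by
  rcases l with _ | ⟨x, t⟩
  · exact absurd rfl h
  · rw [Bf]; simp only [List.headI_cons]
    rw [repStat_cons_cons]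
    simp [Nat.add_comm]

lemma evenStat_Bf {l : List ℕ} :
    evenStat (Bf l) = (if l.headI % 2 = 0 then 1 else 0) + evenStat l := by
  rw [Bf, evenStat_cons]

lemma headI_Bf (l : List ℕ) : (Bf l).headI = l.headI := rfl

lemma headI_Af (l : List ℕ) : (Af l).headI = l.headI + 1 := rfl

lemma eqS_Bf {l : List ℕ} (h : l ≠ []) : eqS (Bf l) := ⟨h, rfl⟩

lemma not_eqS_Af {l : List ℕ} (h : IsPartition l) : ¬ eqS (Af l) := by
  obtain ⟨hne, hs, _⟩ := h
  rcases l with _ | ⟨x, t⟩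
  · exact absurd rfl hne
  rcases t with _ | ⟨y, t₂⟩
  · exact not_eqS_single _
  · rw [Af]
    simp only [List.headI_cons, List.tail_cons]
    rw [eqS_cons_cons]
    rw [List.pairwise_cons] at hs
    have := hs.1 y (by simp)
    omega

lemma evS_Af {l : List ℕ} : evS (Af l) ↔ ¬ evS l := by
  rw [evS, evS, headI_Af]
  omega

lemma evS_Bf {l : List ℕ} : evS (Bf l) ↔ evS l := Iff.rfl

lemma repStat_Af_eq {l : List ℕ} (he : eqS l) : repStat l = repStat (Af l) + 1 := by
  rcases l with _ | ⟨x, t⟩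
  · simp [eqS] at he
  rcases t with _ | ⟨y, t₂⟩
  · simp [eqS] at he
  rw [eqS_cons_cons] at he
  rw [Af]
  simp only [List.headI_cons, List.tail_cons]
  rw [repStat_cons_cons, repStat_cons_cons, if_pos he, if_neg (by omega)]
  omega

lemma repStat_Af_ne {l : List ℕ} (h : IsPartition l) (he : ¬ eqS l) :
    repStat (Af l) = repStat l := by
  obtain ⟨hne, hs, _⟩ := h
  rcases l with _ | ⟨x, t⟩
  · exact absurd rfl hne
  rcases t with _ | ⟨y, t₂⟩
  · rfl
  rw [eqS_cons_cons] at he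
  rw [List.pairwise_cons] at hs
  have := hs.1 y (by simp)
  rw [Af]
  simp only [List.headI_cons, List.tail_cons]
  rw [repStat_cons_cons, repStat_cons_cons, if_neg he, if_neg (by omega)]

lemma evenStat_Af_even {l : List ℕ} (hne : l ≠ []) (he : evS l) :
    evenStat l = evenStat (Af l) + 1 := by
  rcases l with _ | ⟨x, t⟩
  · exact absurd rfl hne
  rw [evS] at he
  simp only [List.headI_cons] at he
  rw [Af]
  simp only [List.headI_cons, List.tail_cons]
  rw [evenStat_cons, evenStat_cons, if_pos he, if_neg (by omega)]
  omega

lemma evenStat_Af_odd {l : List ℕ} (he : ¬ evS l) :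
    evenStat (Af l) = evenStat l + 1 := by
  rcases l with _ | ⟨x, t⟩
  · simp [evS] at he
  rw [evS] at he
  simp only [List.headI_cons] at he
  rw [Af]
  simp only [List.headI_cons, List.tail_cons]
  rw [evenStat_cons, evenStat_cons, if_pos (by omega), if_neg he]
  omega

lemma repStat_pos {l : List ℕ} (he : eqS l) : 1 ≤ repStat l := by
  rcases l with _ | ⟨x, t⟩
  · simp [eqS] at he
  rcases t with _ | ⟨y, t₂⟩
  · simp [eqS] at he
  rw [eqS_cons_cons] at he
  rw [repStat_cons_cons, if_pos he]
  omega

lemma evenStat_pos {l : List ℕ} (hne : l ≠ []) (he : evS l) : 1 ≤ evenStat l := by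
  rcases l with _ | ⟨x, t⟩
  · exact absurd rfl hne
  rw [evS] at he
  simp only [List.headI_cons] at he
  rw [evenStat_cons, if_pos he]
  omega


def w (l : List ℕ) : Rg := pp ^ repStat l * qq ^ evenStat l

def A (n : ℕ) : Rg := ∑ l ∈ P n, w l

def G1 (n : ℕ) : Rg := ∑ l ∈ (P n).filter (fun l => ¬ evS l ∧ ¬ eqS l), w l

def G2 (n : ℕ) : Rg :=
  ∑ l ∈ (P n).filter (fun l => ¬ evS l ∧ eqS l), pp ^ (repStat l - 1) * qq ^ evenStat l

def G3 (n : ℕ) : Rg :=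
  ∑ l ∈ (P n).filter (fun l => evS l ∧ ¬ eqS l), pp ^ repStat l * qq ^ (evenStat l - 1)

def G4 (n : ℕ) : Rg :=
  ∑ l ∈ (P n).filter (fun l => evS l ∧ eqS l), pp ^ (repStat l - 1) * qq ^ (evenStat l - 1)

lemma mem_P_part {n : ℕ} {l : List ℕ} (h : l ∈ P n) : IsPartition l :=
  ((P_mem n l).mp h).1

lemma mem_P_ne {n : ℕ} {l : List ℕ} (h : l ∈ P n) : l ≠ [] := (mem_P_part h).1

lemma sum_P2 (n : ℕ) (f : List ℕ → Rg) :
    ∑ l ∈ P (n+2), f l = (∑ l ∈ P (n+1), f (Af l)) + (∑ l ∈ P (n+1), f (Bf l)) := by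
  have hdisj : Disjoint ((P (n+1)).image Af) ((P (n+1)).image Bf) := by
    rw [Finset.disjoint_left]
    intro a ha hb
    obtain ⟨x, hx, rfl⟩ := Finset.mem_image.mp ha
    obtain ⟨y, hy, hxy⟩ := Finset.mem_image.mp hb
    exact not_eqS_Af (mem_P_part hx) (hxy ▸ eqS_Bf (mem_P_ne hy))
  show ∑ l ∈ (P (n+1)).image Af ∪ (P (n+1)).image Bf, f l = _
  rw [Finset.sum_union hdisj]
  rw [Finset.sum_image, Finset.sum_image]
  · intro x hx y hy hxy
    exact List.tail_eq_of_cons_eq hxy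
  · intro x hx y hy hxy
    have hx' := mem_P_ne hx
    have hy' := mem_P_ne hy
    rcases x with _ | ⟨a, s⟩
    · exact absurd rfl hx'
    rcases y with _ | ⟨b, u⟩
    · exact absurd rfl hy'
    rw [Af, Af] at hxy
    simp only [List.headI_cons, List.tail_cons, List.cons.injEq] at hxy
    simp [hxy.1, hxy.2]
    omega

lemma A_split (n : ℕ) : A n = G1 n + pp * G2 n + qq * G3 n + pp * qq * G4 n := by
  rw [A, ← Finset.sum_filter_add_sum_filter_not (P n) evS]
  rw [← Finset.sum_filter_add_sum_filter_not ((P n).filter evS) eqS]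
  rw [← Finset.sum_filter_add_sum_filter_not ((P n).filter (fun l => ¬ evS l)) eqS]
  rw [Finset.filter_filter, Finset.filter_filter, Finset.filter_filter, Finset.filter_filter]
  have h4 : ∑ l ∈ (P n).filter (fun l => evS l ∧ eqS l), w l = pp * qq * G4 n := by
    rw [G4, Finset.mul_sum]
    refine Finset.sum_congr rfl fun l hl => ?_
    obtain ⟨hP, hev, heq⟩ := Finset.mem_filter.mp hl
    have hr := repStat_pos heq
    have hv := evenStat_pos (mem_P_ne hP) hev
    rw [w, show repStat l = (repStat l - 1) + 1 by omega,
      show evenStat l = (evenStat l - 1) + 1 by omega]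
    simp only [Nat.add_sub_cancel]
    rw [pow_succ, pow_succ]
    ring
  have h3 : ∑ l ∈ (P n).filter (fun l => evS l ∧ ¬ eqS l), w l = qq * G3 n := by
    rw [G3, Finset.mul_sum]
    refine Finset.sum_congr rfl fun l hl => ?_
    obtain ⟨hP, hev, heq⟩ := Finset.mem_filter.mp hl
    have hv := evenStat_pos (mem_P_ne hP) hev
    rw [w, show evenStat l = (evenStat l - 1) + 1 by omega]
    simp only [Nat.add_sub_cancel]
    rw [pow_succ]
    ring
  have h2 : ∑ l ∈ (P n).filter (fun l => ¬ evS l ∧ eqS l), w l = pp * G2 n := by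
    rw [G2, Finset.mul_sum]
    refine Finset.sum_congr rfl fun l hl => ?_
    obtain ⟨hP, hev, heq⟩ := Finset.mem_filter.mp hl
    have hr := repStat_pos heq
    rw [w, show repStat l = (repStat l - 1) + 1 by omega]
    simp only [Nat.add_sub_cancel]
    rw [pow_succ]
    ring
  rw [h4, h3, h2, G1]
  ring


lemma sum_Af_eq_zero (n : ℕ) (f : List ℕ → Rg) (pr : List ℕ → Prop) [DecidablePred pr]
    (hpr : ∀ l, pr (Af l) → eqS (Af l)) :
    ∑ l ∈ P (n+1), (if pr (Af l) then f (Af l) else 0) = 0 := by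
  refine Finset.sum_eq_zero fun l hl => ?_
  rw [if_neg]
  intro hc
  exact not_eqS_Af (mem_P_part hl) (hpr l hc)

lemma sum_Bf_eq_zero (n : ℕ) (f : List ℕ → Rg) (pr : List ℕ → Prop) [DecidablePred pr]
    (hpr : ∀ l, l ≠ [] → pr (Bf l) → ¬ eqS (Bf l)) :
    ∑ l ∈ P (n+1), (if pr (Bf l) then f (Bf l) else 0) = 0 := by
  refine Finset.sum_eq_zero fun l hl => ?_
  rw [if_neg]
  intro hc
  exact hpr l (mem_P_ne hl) hc (eqS_Bf (mem_P_ne hl))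

lemma G2_rec (n : ℕ) : G2 (n+2) = G1 (n+1) + pp * G2 (n+1) := by
  rw [G2, Finset.sum_filter, sum_P2]
  rw [show (∑ l ∈ P (n+1), if ¬ evS (Af l) ∧ eqS (Af l) then
        pp ^ (repStat (Af l) - 1) * qq ^ evenStat (Af l) else 0) = 0 from
      Finset.sum_eq_zero fun l hl => if_neg fun hc => not_eqS_Af (mem_P_part hl) hc.2, zero_add]
  rw [G1, G2, Finset.mul_sum, Finset.sum_filter, Finset.sum_filter, ← Finset.sum_add_distrib]
  refine Finset.sum_congr rfl fun l hl => ?_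
  have hne := mem_P_ne hl
  have heqB := eqS_Bf hne
  rw [repStat_Bf hne, Nat.add_sub_cancel, evenStat_Bf]
  by_cases hev : evS l
  · rw [if_neg (fun hc => hc.1 (evS_Bf.mpr hev)), if_neg (fun hc => hc.1 hev),
      if_neg (fun hc => hc.1 hev)]
    simp
  · have hev' : ¬ l.headI % 2 = 0 := hev
    rw [if_pos ⟨fun hc => hev (evS_Bf.mp hc), heqB⟩, if_neg hev']
    by_cases heq : eqS l
    · rw [if_neg (fun hc => hc.2 heq), if_pos ⟨hev, heq⟩]
      have hr := repStat_pos heq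
      rw [show repStat l = (repStat l - 1) + 1 by omega]
      simp only [Nat.add_sub_cancel]
      rw [pow_succ, zero_add]
      ring
    · rw [if_pos ⟨hev, heq⟩, if_neg (fun hc => heq hc.2), w, zero_add, add_zero]

lemma G4_rec (n : ℕ) : G4 (n+2) = qq * G3 (n+1) + pp * qq * G4 (n+1) := by
  rw [G4, Finset.sum_filter, sum_P2]
  rw [show (∑ l ∈ P (n+1), if evS (Af l) ∧ eqS (Af l) then
        pp ^ (repStat (Af l) - 1) * qq ^ (evenStat (Af l) - 1) else 0) = 0 from
      Finset.sum_eq_zero fun l hl => if_neg fun hc => not_eqS_Af (mem_P_part hl) hc.2, zero_add]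
  rw [G3, G4, Finset.mul_sum, Finset.mul_sum, Finset.sum_filter, Finset.sum_filter,
    ← Finset.sum_add_distrib]
  refine Finset.sum_congr rfl fun l hl => ?_
  have hne := mem_P_ne hl
  have heqB := eqS_Bf hne
  rw [repStat_Bf hne, Nat.add_sub_cancel, evenStat_Bf]
  by_cases hev : evS l
  · have hev' : l.headI % 2 = 0 := hev
    rw [if_pos ⟨evS_Bf.mpr hev, heqB⟩, if_pos hev']
    have hv := evenStat_pos hne hev
    rw [show 1 + evenStat l - 1 = (evenStat l - 1) + 1 by omega]
    by_cases heq : eqS l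
    · rw [if_neg (fun hc => hc.2 heq), if_pos ⟨hev, heq⟩]
      have hr := repStat_pos heq
      rw [show repStat l = (repStat l - 1) + 1 by omega]
      simp only [Nat.add_sub_cancel]
      rw [pow_succ, pow_succ, zero_add]
      ring
    · rw [if_pos ⟨hev, heq⟩, if_neg (fun hc => heq hc.2), pow_succ, add_zero]
      ring
  · rw [if_neg (fun hc => hev (evS_Bf.mp hc.1)), if_neg (fun hc => hev hc.1),
      if_neg (fun hc => hev hc.1)]
    simp

lemma G1_rec (n : ℕ) : G1 (n+2) = G3 (n+1) + G4 (n+1) := by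
  rw [G1, Finset.sum_filter, sum_P2]
  rw [show (∑ l ∈ P (n+1), if ¬ evS (Bf l) ∧ ¬ eqS (Bf l) then w (Bf l) else 0) = 0 from
      Finset.sum_eq_zero fun l hl => if_neg fun hc => hc.2 (eqS_Bf (mem_P_ne hl)), add_zero]
  rw [G3, G4, Finset.sum_filter, Finset.sum_filter, ← Finset.sum_add_distrib]
  refine Finset.sum_congr rfl fun l hl => ?_
  have hne := mem_P_ne hl
  have hP := mem_P_part hl
  have hneqA := not_eqS_Af hP
  by_cases hev : evS l
  · rw [if_pos ⟨fun hc => (evS_Af.mp hc) hev, hneqA⟩]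
    have hv := evenStat_pos hne hev
    have heA := evenStat_Af_even hne hev
    by_cases heq : eqS l
    · rw [if_neg (fun hc => hc.2 heq), if_pos ⟨hev, heq⟩, zero_add]
      have hr := repStat_pos heq
      have hrA := repStat_Af_eq heq
      rw [w, show repStat (Af l) = repStat l - 1 by omega,
        show evenStat (Af l) = evenStat l - 1 by omega]
    · rw [if_pos ⟨hev, heq⟩, if_neg (fun hc => heq hc.2), add_zero]
      rw [w, repStat_Af_ne hP heq, show evenStat (Af l) = evenStat l - 1 by omega]
  · rw [if_neg (fun hc => hc.1 (evS_Af.mpr hev)), if_neg (fun hc => hev hc.1),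
      if_neg (fun hc => hev hc.1)]
    simp

lemma G3_rec (n : ℕ) : G3 (n+2) = G1 (n+1) + G2 (n+1) := by
  rw [G3, Finset.sum_filter, sum_P2]
  rw [show (∑ l ∈ P (n+1), if evS (Bf l) ∧ ¬ eqS (Bf l) then
        pp ^ repStat (Bf l) * qq ^ (evenStat (Bf l) - 1) else 0) = 0 from
      Finset.sum_eq_zero fun l hl => if_neg fun hc => hc.2 (eqS_Bf (mem_P_ne hl)), add_zero]
  rw [G1, G2, Finset.sum_filter, Finset.sum_filter, ← Finset.sum_add_distrib]
  refine Finset.sum_congr rfl fun l hl => ?_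
  have hne := mem_P_ne hl
  have hP := mem_P_part hl
  have hneqA := not_eqS_Af hP
  by_cases hev : evS l
  · rw [if_neg (fun hc => (evS_Af.mp hc.1) hev), if_neg (fun hc => hc.1 hev),
      if_neg (fun hc => hc.1 hev)]
    simp
  · rw [if_pos ⟨evS_Af.mpr hev, hneqA⟩]
    have heA := evenStat_Af_odd hev
    rw [show evenStat (Af l) - 1 = evenStat l by omega]
    by_cases heq : eqS l
    · rw [if_neg (fun hc => hc.2 heq), if_pos ⟨hev, heq⟩, zero_add]
      have hrA := repStat_Af_eq heq
      rw [show repStat (Af l) = repStat l - 1 by omega]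
    · rw [if_pos ⟨hev, heq⟩, if_neg (fun hc => heq hc.2), add_zero]
      rw [w, repStat_Af_ne hP heq]


lemma A_zero : A 0 = 0 := by simp [A, P]

lemma P_one : P 1 = {[1]} := rfl

lemma G1_one : G1 1 = 1 := by
  rw [G1, P_one, Finset.filter_singleton, if_pos (by decide)]
  rw [Finset.sum_singleton, w]
  norm_num [repStat, evenStat]

lemma G2_one : G2 1 = 0 := by
  rw [G2, P_one, Finset.filter_singleton, if_neg (by decide), Finset.sum_empty]

lemma G3_one : G3 1 = 0 := by
  rw [G3, P_one, Finset.filter_singleton, if_neg (by decide), Finset.sum_empty]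

lemma G4_one : G4 1 = 0 := by
  rw [G4, P_one, Finset.filter_singleton, if_neg (by decide), Finset.sum_empty]

lemma A_one : A 1 = 1 := by
  rw [A_split, G1_one, G2_one, G3_one, G4_one]; ring

lemma A_two : A 2 = pp + qq := by
  rw [A_split, G1_rec 0, G2_rec 0, G3_rec 0, G4_rec 0,
    G1_one, G2_one, G3_one, G4_one]
  ring

lemma G1_two : G1 2 = 0 := by rw [G1_rec 0, G3_one, G4_one]; ring
lemma G2_two : G2 2 = 1 := by rw [G2_rec 0, G1_one, G2_one]; ring
lemma G3_two : G3 2 = 1 := by rw [G3_rec 0, G1_one, G2_one]; ring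
lemma G4_two : G4 2 = 0 := by rw [G4_rec 0, G3_one, G4_one]; ring

lemma G1_three : G1 3 = 1 := by rw [G1_rec 1, G3_two, G4_two]; ring
lemma G2_three : G2 3 = pp := by rw [G2_rec 1, G1_two, G2_two]; ring
lemma G3_three : G3 3 = 1 := by rw [G3_rec 1, G1_two, G2_two]; ring
lemma G4_three : G4 3 = qq := by rw [G4_rec 1, G3_two, G4_two]; ring

lemma A_three : A 3 = 1 + pp^2 + qq + pp*qq^2 := by
  rw [A_split, G1_three, G2_three, G3_three, G4_three]; ring

lemma A_four : A 4 = (1+qq) + pp*(1+pp^2) + qq*(1+pp) + pp*qq*(qq+pp*qq^2) := by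
  rw [A_split, G1_rec 2, G2_rec 2, G3_rec 2, G4_rec 2,
    G1_three, G2_three, G3_three, G4_three]
  ring

lemma A_rec (k : ℕ) :
    A (k+5) = pp*(1+qq) * A (k+4) + (1 - pp^2*qq) * A (k+3)
      + (1-pp)*(1+qq) * A (k+2) + (pp-1)^2*qq * A (k+1) := by
  have g12 : G1 (k+2) = G3 (k+1) + G4 (k+1) := G1_rec k
  have g22 : G2 (k+2) = G1 (k+1) + pp * G2 (k+1) := G2_rec k
  have g32 : G3 (k+2) = G1 (k+1) + G2 (k+1) := G3_rec k
  have g42 : G4 (k+2) = qq * G3 (k+1) + pp*qq*G4 (k+1) := G4_rec k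
  have g13 : G1 (k+3) = G3 (k+2) + G4 (k+2) := G1_rec (k+1)
  have g23 : G2 (k+3) = G1 (k+2) + pp * G2 (k+2) := G2_rec (k+1)
  have g33 : G3 (k+3) = G1 (k+2) + G2 (k+2) := G3_rec (k+1)
  have g43 : G4 (k+3) = qq * G3 (k+2) + pp*qq*G4 (k+2) := G4_rec (k+1)
  have g14 : G1 (k+4) = G3 (k+3) + G4 (k+3) := G1_rec (k+2)
  have g24 : G2 (k+4) = G1 (k+3) + pp * G2 (k+3) := G2_rec (k+2)
  have g34 : G3 (k+4) = G1 (k+3) + G2 (k+3) := G3_rec (k+2)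
  have g44 : G4 (k+4) = qq * G3 (k+3) + pp*qq*G4 (k+3) := G4_rec (k+2)
  have g15 : G1 (k+5) = G3 (k+4) + G4 (k+4) := G1_rec (k+3)
  have g25 : G2 (k+5) = G1 (k+4) + pp * G2 (k+4) := G2_rec (k+3)
  have g35 : G3 (k+5) = G1 (k+4) + G2 (k+4) := G3_rec (k+3)
  have g45 : G4 (k+5) = qq * G3 (k+4) + pp*qq*G4 (k+4) := G4_rec (k+3)
  simp only [A_split]
  rw [g15, g25, g35, g45, g14, g24, g34, g44, g13, g23, g33, g43, g12, g22, g32, g42]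
  ring


open PowerSeries in
lemma main :
    (PowerSeries.mk fun n =>
        ∑ᶠ l ∈ {l : List ℕ | IsPartition l ∧ perim l = n},
          pp ^ repStat l * qq ^ evenStat l) *
      (1 - C (pp * (1 + qq)) * X - C (1 - pp ^ 2 * qq) * X ^ 2
         - C ((1 - pp) * (1 + qq)) * X ^ 3 - C ((pp - 1) ^ 2 * qq) * X ^ 4) =
    X * (1 - C ((pp - 1) * qq) * (X ^ 2 + X)) := by
  have hmk : (PowerSeries.mk fun n =>
      ∑ᶠ l ∈ {l : List ℕ | IsPartition l ∧ perim l = n},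
        pp ^ repStat l * qq ^ evenStat l) = PowerSeries.mk A := by
    refine PowerSeries.ext fun n => ?_
    rw [PowerSeries.coeff_mk, PowerSeries.coeff_mk]
    have hset : {l : List ℕ | IsPartition l ∧ perim l = n} = ↑(P n) := by
      ext l
      simp [P_mem]
    rw [hset, finsum_mem_coe_finset]
    rfl
  rw [hmk]
  have expand : (PowerSeries.mk A) *
      (1 - C (pp * (1 + qq)) * X - C (1 - pp ^ 2 * qq) * X ^ 2
         - C ((1 - pp) * (1 + qq)) * X ^ 3 - C ((pp - 1) ^ 2 * qq) * X ^ 4)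
      = PowerSeries.mk A
        - C (pp * (1 + qq)) * (PowerSeries.mk A * X ^ 1)
        - C (1 - pp ^ 2 * qq) * (PowerSeries.mk A * X ^ 2)
        - C ((1 - pp) * (1 + qq)) * (PowerSeries.mk A * X ^ 3)
        - C ((pp - 1) ^ 2 * qq) * (PowerSeries.mk A * X ^ 4) := by ring
  have expandR : (X : PowerSeries Rg) * (1 - C ((pp - 1) * qq) * (X ^ 2 + X))
      = X ^ 1 - C ((pp - 1) * qq) * X ^ 3 - C ((pp - 1) * qq) * X ^ 2 := by ring
  rw [expand, expandR]
  refine PowerSeries.ext fun n => ?_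
  simp only [LinearMap.map_sub, PowerSeries.coeff_C_mul, PowerSeries.coeff_mul_X_pow',
    PowerSeries.coeff_mk, PowerSeries.coeff_X_pow]
  match n with
  | 0 =>
    norm_num [A_zero]
  | 1 =>
    norm_num [A_one, A_zero]
  | 2 =>
    norm_num [A_two, A_one, A_zero]
    ring
  | 3 =>
    norm_num [A_three, A_two, A_one, A_zero]
    ring
  | 4 =>
    norm_num [A_four, A_three, A_two, A_one, A_zero]
    ring
  | (m+5) =>
    rw [if_pos (show 2 ≤ m+5 by omega), if_pos (show 3 ≤ m+5 by omega)]
    rw [show m+5-1 = m+4 by omega, show m+5-2 = m+3 by omega,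
      show m+5-3 = m+2 by omega, show m+5-4 = m+1 by omega]
    rw [PowerSeries.coeff_C, PowerSeries.coeff_C, if_neg (show ¬(m+2 = 0) by omega),
      if_neg (show ¬(m+3 = 0) by omega)]
    rw [if_pos (show 1 ≤ m+5 by omega), if_pos (show 4 ≤ m+5 by omega),
      if_neg (show ¬(m+5 = 1) by omega)]
    simp only [ite_self]
    linear_combination A_rec m

end

end GFaux

open PowerSeries in
theorem gen_fun_rep_even :
    letI p : MvPolynomial (Fin 2) ℤ := MvPolynomial.X 0
    letI q : MvPolynomial (Fin 2) ℤ := MvPolynomial.X 1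
    (PowerSeries.mk fun n =>
        ∑ᶠ l ∈ {l : List ℕ | IsPartition l ∧ perim l = n},
          p ^ repStat l * q ^ evenStat l) *
      (1 - PowerSeries.C (p * (1 + q)) * PowerSeries.X
         - PowerSeries.C (1 - p ^ 2 * q) * PowerSeries.X ^ 2
         - PowerSeries.C ((1 - p) * (1 + q)) * PowerSeries.X ^ 3
         - PowerSeries.C ((p - 1) ^ 2 * q) * PowerSeries.X ^ 4) =
    PowerSeries.X *
      (1 - PowerSeries.C ((p - 1) * q) * (PowerSeries.X ^ 2 + PowerSeries.X)) :=
  GFaux.main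
end
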